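/- arXiv:0808.0313 — 4 statements merged into one kernel-verified Lean document; each statement's English description precedes it below -/
import Mathlib

section
/- Let D ⊂ ℂⁿ be a bounded domain such that for every boundary point a ∈ ∂D there exist a neighborhood U_a of a and a holomorphic function f_a on D ∩ U_a with lim_{z→a} |f_a(z)| = ∞. Then D is taut. -/
open Complex Filter Metric Set
open scoped Topology
open BoundedContinuousFunction
open scoped NNReal

lemma lipschitzOnWith_of_boundedBall {E : Type*} [NormedAddCommGroup E] [NormedSpace ℂ E]
    {g : ℂ → E} {c : ℂ} {R r M : ℝ} (hr0 : 0 ≤ r) (hrR : r < R)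
    (hd : DifferentiableOn ℂ g (ball c R)) (hM : ∀ z ∈ ball c R, ‖g z‖ ≤ M) :
    LipschitzOnWith (Real.toNNReal ((2*M+1)/(R-r))) g (closedBall c r) := by
  have hR0 : 0 < R := lt_of_le_of_lt hr0 hrR
  have hM0 : 0 ≤ M := le_trans (norm_nonneg _) (hM c (mem_ball_self hR0))
  have hsub : ∀ z ∈ closedBall c r, ball z (R - r) ⊆ ball c R := by
    intro z hz w hw
    have hz' : dist z c ≤ r := mem_closedBall.mp hz
    have hw' : dist w z < R - r := mem_ball.mp hw
    have := dist_triangle w z c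
    simp only [mem_ball]
    linarith
  have hderiv : ∀ z ∈ closedBall c r, ‖deriv g z‖ ≤ (2*M+1)/(R-r) := by
    intro z hz
    have hzball : z ∈ ball c R := by
      have : dist z c ≤ r := mem_closedBall.mp hz
      exact mem_ball.mpr (lt_of_le_of_lt this hrR)
    have hd' : DifferentiableOn ℂ g (ball z (R - r)) := hd.mono (hsub z hz)
    have hmaps : MapsTo g (ball z (R - r)) (ball (g z) (2*M+1)) := by
      intro w hw
      have hwball : w ∈ ball c R := hsub z hz hw
      have : dist (g w) (g z) ≤ M + M := by
        calc dist (g w) (g z) ≤ ‖g w‖ + ‖g z‖ := dist_le_norm_add_norm _ _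
        _ ≤ M + M := add_le_add (hM w hwball) (hM z hzball)
      exact mem_ball.mpr (lt_of_le_of_lt this (by linarith))
    exact Complex.norm_deriv_le_div_of_mapsTo_ball hd' (hmaps.mono_right ball_subset_closedBall) (by linarith)
  refine (convex_closedBall c r).lipschitzOnWith_of_nnnorm_hasDerivWithin_le
    (f' := deriv g) (fun x hx => ?_) (fun x hx => ?_)
  · have hxball : x ∈ ball c R :=
      mem_ball.mpr (lt_of_le_of_lt (mem_closedBall.mp hx) hrR)
    exact ((hd.differentiableAt (isOpen_ball.mem_nhds hxball)).hasDerivAt).hasDerivWithinAt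
  · rw [← norm_toNNReal]
    exact Real.toNNReal_mono (hderiv x hx)

set_option synthInstance.maxHeartbeats 1000000 in
lemma montel {E : Type*} [NormedAddCommGroup E] [NormedSpace ℂ E] [FiniteDimensional ℂ E]
    (c : ℂ) {R M : ℝ} (hR : 0 < R) (g : ℕ → ℂ → E)
    (hd : ∀ j, DifferentiableOn ℂ (g j) (ball c R))
    (hM : ∀ j, ∀ z ∈ ball c R, ‖g j z‖ ≤ M) :
    ∃ σ : ℕ → ℕ, StrictMono σ ∧ ∃ h : ℂ → E,
      TendstoLocallyUniformlyOn (fun j => g (σ j)) h atTop (ball c R) := by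
  haveI : ProperSpace E := FiniteDimensional.proper ℂ E
  have hM0 : 0 ≤ M := le_trans (norm_nonneg _) (hM 0 c (mem_ball_self hR))
  -- the exhaustion by closed balls
  set r : ℕ → ℝ := fun m => R - R / (m + 2) with hr_def
  have hr0 : ∀ m, 0 ≤ r m := by
    intro m
    have h2 : (2:ℝ) ≤ (m:ℝ) + 2 := by
      have : (0:ℝ) ≤ (m:ℝ) := Nat.cast_nonneg m
      linarith
    have : R / ((m:ℝ) + 2) ≤ R / 2 :=
      div_le_div_of_nonneg_left hR.le (by norm_num) h2
    simp only [hr_def]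
    linarith
  have hrR : ∀ m, r m < R := by
    intro m
    have : 0 < R / ((m:ℝ) + 2) := by positivity
    simp only [hr_def]; linarith
  have hrmem : ∀ m, closedBall c (r m) ⊆ ball c R := fun m =>
    closedBall_subset_ball (hrR m)
  have hexh : ∀ z ∈ ball c R, ∃ m : ℕ, z ∈ closedBall c (r m) := by
    intro z hz
    have hz' : dist z c < R := mem_ball.mp hz
    obtain ⟨m, hm⟩ := exists_nat_ge (R / (R - dist z c))
    refine ⟨m, mem_closedBall.mpr ?_⟩
    have hpos : 0 < R - dist z c := by linarith
    have h1 : R / ((m:ℝ) + 2) ≤ R - dist z c := by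
      rw [div_le_iff₀ (by positivity)]
      have h2 : R / (R - dist z c) ≤ (m:ℝ) + 2 := by linarith
      calc R = (R / (R - dist z c)) * (R - dist z c) := by field_simp
      _ ≤ ((m:ℝ) + 2) * (R - dist z c) := by
          exact mul_le_mul_of_nonneg_right h2 hpos.le
      _ = (R - dist z c) * ((m:ℝ) + 2) := by ring
    simp only [hr_def]
    linarith
  -- bounded continuous restrictions
  have hcont : ∀ j, ContinuousOn (g j) (ball c R) := fun j => (hd j).continuousOn
  set F : ∀ m : ℕ, ℕ → (closedBall c (r m) →ᵇ E) := fun m j =>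
    BoundedContinuousFunction.ofNormedAddCommGroup
      ((closedBall c (r m)).restrict (g j))
      (((hcont j).mono (hrmem m)).restrict) M
      (fun x => hM j x (hrmem m x.2)) with hF_def
  -- compactness of the closures of the ranges
  have hAcomp : ∀ m, IsCompact (closure (Set.range (F m))) := by
    intro m
    haveI : CompactSpace (closedBall c (r m)) :=
      isCompact_iff_compactSpace.mp (isCompact_closedBall c (r m))
    apply BoundedContinuousFunction.arzela_ascoli (closedBall (0 : E) M)
      (isCompact_closedBall _ _)
    · rintro f x ⟨j, rfl⟩
      exact mem_closedBall_zero_iff.mpr (hM j x (hrmem m x.2))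
    · -- equicontinuity
      set C : ℝ≥0 := Real.toNNReal ((2*M+1)/(R - r m)) with hC
      have hlip : ∀ (a : Set.range (F m)), LipschitzWith C (a : closedBall c (r m) → E) := by
        rintro ⟨a, j, rfl⟩
        have : LipschitzOnWith C (g j) (closedBall c (r m)) :=
          lipschitzOnWith_of_boundedBall (hr0 m) (hrR m) (hd j) (hM j)
        exact LipschitzOnWith.to_restrict this
      intro x
      rw [Metric.equicontinuousAt_iff]
      intro ε hε
      refine ⟨ε / (C + 1), by positivity, fun y hy i => ?_⟩
      calc dist (i.1 x) (i.1 y) ≤ C * dist x y := (hlip i).dist_le_mul x y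
      _ ≤ C * (ε / (C + 1)) := by
          apply mul_le_mul_of_nonneg_left (le_of_lt (by rwa [dist_comm] at hy))
            (NNReal.coe_nonneg C)
      _ < ε := by
          rw [div_eq_inv_mul, ← mul_assoc]
          have hC1 : (0:ℝ) < (C:ℝ) + 1 := by positivity
          have : (C:ℝ) * ((C:ℝ)+1)⁻¹ < 1 := by
            rw [mul_inv_lt_iff₀ hC1]; simp
          calc (C:ℝ) * ((C:ℝ)+1)⁻¹ * ε < 1 * ε := by
                exact mul_lt_mul_of_pos_right this hε
          _ = ε := one_mul ε
  -- sequential compactness in the product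
  set S : Set (∀ m : ℕ, closedBall c (r m) →ᵇ E) :=
    Set.pi Set.univ (fun m => closure (Set.range (F m))) with hS_def
  have hScomp : IsCompact S := isCompact_univ_pi hAcomp
  have hmemS : ∀ j, (fun m => F m j) ∈ S := by
    intro j m _
    exact subset_closure (Set.mem_range_self j)
  obtain ⟨u, huS, σ, hσ, hconv⟩ := hScomp.isSeqCompact hmemS
  -- uniform convergence on each closed ball
  have hunif : ∀ m, TendstoUniformly (fun k (x : closedBall c (r m)) => g (σ k) x)
      (fun x => u m x) atTop := by
    intro m
    have : Tendsto (fun k => F m (σ k)) atTop (𝓝 (u m)) :=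
      (continuous_apply m).continuousAt.tendsto.comp hconv
    have := BoundedContinuousFunction.tendsto_iff_tendstoUniformly.mp this
    convert this using 1
    rfl
  -- pointwise limits
  have hpt : ∀ m (z : ℂ) (hz : z ∈ closedBall c (r m)),
      Tendsto (fun k => g (σ k) z) atTop (𝓝 (u m ⟨z, hz⟩)) := by
    intro m z hz
    exact (hunif m).tendsto_at ⟨z, hz⟩
  -- the limit function
  classical
  set h : ℂ → E := fun z =>
    if hz : ∃ m, z ∈ closedBall c (r m) then u hz.choose ⟨z, hz.choose_spec⟩ else 0 with hh_def
  have hkey : ∀ m (z : ℂ) (hz : z ∈ closedBall c (r m)), h z = u m ⟨z, hz⟩ := by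
    intro m z hz
    have hex : ∃ m, z ∈ closedBall c (r m) := ⟨m, hz⟩
    simp only [hh_def, dif_pos hex]
    exact tendsto_nhds_unique (hpt hex.choose z hex.choose_spec) (hpt m z hz)
  refine ⟨σ, hσ, h, ?_⟩
  rw [tendstoLocallyUniformlyOn_iff_forall_isCompact isOpen_ball]
  intro K hKsub hKcomp
  rcases K.eq_empty_or_nonempty with rfl | hKne
  · simp [TendstoUniformlyOn]
  obtain ⟨z₀, hz₀K, hz₀max⟩ := hKcomp.exists_isMaxOn hKne
    (continuous_id.dist continuous_const).continuousOn
  obtain ⟨m, hm⟩ := hexh z₀ (hKsub hz₀K)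
  have hKm : K ⊆ closedBall c (r m) := by
    intro z hz
    exact mem_closedBall.mpr (le_trans (hz₀max hz) (mem_closedBall.mp hm))
  refine TendstoUniformlyOn.mono ?_ hKm
  rw [tendstoUniformlyOn_iff_tendstoUniformly_comp_coe]
  have : (h ∘ (Subtype.val : closedBall c (r m) → ℂ)) = fun x => u m x := by
    funext x
    exact hkey m x x.2
  rw [this]
  exact hunif m

lemma key_frontier_step
    {n : ℕ} {D : Set (EuclideanSpace ℂ (Fin n))} (hDopen : IsOpen D)
    (h : ∀ a ∈ frontier D, ∃ U : Set (EuclideanSpace ℂ (Fin n)), IsOpen U ∧ a ∈ U ∧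
      ∃ f : EuclideanSpace ℂ (Fin n) → ℂ, DifferentiableOn ℂ f (D ∩ U) ∧
        Filter.Tendsto (fun z => ‖f z‖) (𝓝[D ∩ U] a) atTop)
    {φ : ℕ → ℂ → EuclideanSpace ℂ (Fin n)}
    (hφd : ∀ j, DifferentiableOn ℂ (φ j) (ball (0:ℂ) 1))
    (hφD : ∀ j, MapsTo (φ j) (ball (0:ℂ) 1) D)
    {ψ : ℂ → EuclideanSpace ℂ (Fin n)}
    (hTLU : TendstoLocallyUniformlyOn φ ψ atTop (ball (0:ℂ) 1))
    {z₀ : ℂ} (hz₀ : z₀ ∈ ball (0:ℂ) 1) (hfr : ψ z₀ ∉ D) :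
    ∃ ρ > 0, ball z₀ ρ ⊆ ball (0:ℂ) 1 ∧ ∀ z₁ ∈ ball z₀ ρ, ψ z₁ ∉ D := by
  have hψd : DifferentiableOn ℂ ψ (ball (0:ℂ) 1) :=
    hTLU.differentiableOn (Eventually.of_forall hφd) isOpen_ball
  have hψc : ContinuousOn ψ (ball (0:ℂ) 1) := hψd.continuousOn
  -- ψ z₀ is a boundary point
  have hψcl : ∀ z ∈ ball (0:ℂ) 1, ψ z ∈ closure D := fun z hz =>
    mem_closure_of_tendsto (hTLU.tendsto_at hz)
      (Eventually.of_forall fun j => hφD j hz)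
  have ha : ψ z₀ ∈ frontier D := by
    rw [frontier, hDopen.interior_eq]
    exact ⟨hψcl z₀ hz₀, hfr⟩
  obtain ⟨U, hUo, haU, f, hfd, hftend⟩ := h (ψ z₀) ha
  -- shrink U so that ‖f‖ ≥ 2 on D ∩ U'
  have h2 : ∀ᶠ z in 𝓝[D ∩ U] (ψ z₀), 2 ≤ ‖f z‖ := hftend.eventually_ge_atTop 2
  rw [eventually_nhdsWithin_iff] at h2
  rw [Metric.eventually_nhds_iff] at h2
  obtain ⟨ε, hε, hfge⟩ := h2
  set U' : Set (EuclideanSpace ℂ (Fin n)) := U ∩ ball (ψ z₀) ε with hU'_def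
  have hU'o : IsOpen U' := hUo.inter isOpen_ball
  have haU' : ψ z₀ ∈ U' := ⟨haU, mem_ball_self hε⟩
  have hf2 : ∀ z ∈ D ∩ U', 2 ≤ ‖f z‖ := by
    rintro z ⟨hzD, hzU, hzb⟩
    exact hfge (mem_ball.mp hzb) ⟨hzD, hzU⟩
  have hfd' : DifferentiableOn ℂ f (D ∩ U') :=
    hfd.mono (inter_subset_inter_right D inter_subset_left)
  have hDU'o : IsOpen (D ∩ U') := hDopen.inter hU'o
  -- a closed ball around z₀ mapped into U' by ψ
  have hVo : IsOpen (ball (0:ℂ) 1 ∩ ψ ⁻¹' U') :=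
    hψc.isOpen_inter_preimage isOpen_ball hU'o
  have hz₀V : z₀ ∈ ball (0:ℂ) 1 ∩ ψ ⁻¹' U' := ⟨hz₀, haU'⟩
  obtain ⟨r₂, hr₂, hr₂sub⟩ :=
    (Metric.nhds_basis_closedBall.mem_iff).mp (hVo.mem_nhds hz₀V)
  have hcb1 : closedBall z₀ r₂ ⊆ ball (0:ℂ) 1 := fun z hz => (hr₂sub hz).1
  have hcbU' : ∀ z ∈ closedBall z₀ r₂, ψ z ∈ U' := fun z hz => (hr₂sub hz).2
  -- eventually the φ j map the closed ball into D ∩ U'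
  have hLcomp : IsCompact (ψ '' closedBall z₀ r₂) :=
    (isCompact_closedBall _ _).image_of_continuousOn (hψc.mono hcb1)
  have hLU' : ψ '' closedBall z₀ r₂ ⊆ U' := by
    rintro _ ⟨z, hz, rfl⟩; exact hcbU' z hz
  obtain ⟨δ, hδ, hthick⟩ := hLcomp.exists_thickening_subset_open hU'o hLU'
  have hTU : TendstoUniformlyOn φ ψ atTop (closedBall z₀ r₂) :=
    (tendstoLocallyUniformlyOn_iff_forall_isCompact isOpen_ball).mp hTLU
      (closedBall z₀ r₂) hcb1 (isCompact_closedBall _ _)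
  have hev : ∀ᶠ j in atTop, ∀ z ∈ closedBall z₀ r₂, dist (φ j z) (ψ z) < δ := by
    have := (Metric.tendstoUniformlyOn_iff.mp hTU) δ hδ
    filter_upwards [this] with j hj z hz using by rw [dist_comm]; exact hj z hz
  obtain ⟨N, hN⟩ := eventually_atTop.mp hev
  have hmaps : ∀ k, MapsTo (φ (N + k)) (closedBall z₀ r₂) (D ∩ U') := by
    intro k z hz
    refine ⟨hφD (N + k) (hcb1 hz), hthick ?_⟩
    rw [Metric.mem_thickening_iff]
    exact ⟨ψ z, mem_image_of_mem ψ hz, hN (N + k) (Nat.le_add_right N k) z hz⟩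
  -- the auxiliary functions g k = (f ∘ φ (N+k))⁻¹
  set g : ℕ → ℂ → ℂ := fun k z => (f (φ (N + k) z))⁻¹ with hg_def
  have hballcb : ball z₀ r₂ ⊆ closedBall z₀ r₂ := ball_subset_closedBall
  have hcomp : ∀ k, DifferentiableOn ℂ (fun z => f (φ (N + k) z)) (ball z₀ r₂) := by
    intro k
    exact hfd'.comp ((hφd (N + k)).mono (hballcb.trans hcb1))
      (fun z hz => hmaps k (hballcb hz))
  have hne0 : ∀ k, ∀ z ∈ ball z₀ r₂, f (φ (N + k) z) ≠ 0 := by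
    intro k z hz
    have := hf2 _ (hmaps k (hballcb hz))
    intro h0
    rw [h0] at this
    simp at this
    linarith
  have hgd : ∀ k, DifferentiableOn ℂ (g k) (ball z₀ r₂) := fun k =>
    (hcomp k).inv (hne0 k)
  have hgM : ∀ k, ∀ z ∈ ball z₀ r₂, ‖g k z‖ ≤ 1 := by
    intro k z hz
    have h2z := hf2 _ (hmaps k (hballcb hz))
    simp only [hg_def, norm_inv]
    rw [inv_le_one_iff₀]
    right; linarith
  obtain ⟨τ, hτ, G, hGTLU⟩ := montel z₀ hr₂ g hgd hgM
  have hGd : DifferentiableOn ℂ G (ball z₀ r₂) :=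
    hGTLU.differentiableOn (Eventually.of_forall fun k => hgd (τ k)) isOpen_ball
  -- pointwise convergence of the relevant φ's
  have hidx : Tendsto (fun k => N + τ k) atTop atTop :=
    tendsto_atTop_mono (fun k => Nat.le_add_left (τ k) N) hτ.tendsto_atTop
  have hptz : ∀ z ∈ closedBall z₀ r₂,
      Tendsto (fun k => φ (N + τ k) z) atTop (𝓝 (ψ z)) := by
    intro z hz
    exact (hTLU.tendsto_at (hcb1 hz)).comp hidx
  -- G z₀ = 0
  have hG0 : G z₀ = 0 := by
    have h1 : Tendsto (fun k => g (τ k) z₀) atTop (𝓝 (G z₀)) :=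
      hGTLU.tendsto_at (mem_ball_self hr₂)
    have htendin : Tendsto (fun k => φ (N + τ k) z₀) atTop (𝓝[D ∩ U] (ψ z₀)) := by
      rw [tendsto_nhdsWithin_iff]
      refine ⟨hptz z₀ (mem_closedBall_self hr₂.le), Eventually.of_forall fun k => ?_⟩
      have := hmaps (τ k) (mem_closedBall_self hr₂.le)
      exact ⟨this.1, this.2.1⟩
    have hnorm : Tendsto (fun k => ‖f (φ (N + τ k) z₀)‖) atTop atTop :=
      hftend.comp htendin
    have h2 : Tendsto (fun k => g (τ k) z₀) atTop (𝓝 0) := by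
      rw [tendsto_zero_iff_norm_tendsto_zero]
      simp only [hg_def, norm_inv]
      exact hnorm.inv_tendsto_atTop
    exact tendsto_nhds_unique h1 h2
  refine ⟨r₂, hr₂, (ball_subset_closedBall.trans hcb1), fun z₁ hz₁ hz₁D => ?_⟩
  -- suppose ψ z₁ ∈ D; derive a contradiction
  have hz₁U' : ψ z₁ ∈ U' := hcbU' z₁ (hballcb hz₁)
  have hwD : ψ z₁ ∈ D ∩ U' := ⟨hz₁D, hz₁U'⟩
  have hw2 : 2 ≤ ‖f (ψ z₁)‖ := hf2 _ hwD
  have hwne : f (ψ z₁) ≠ 0 := by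
    intro h0; rw [h0] at hw2; simp at hw2; linarith
  have hfc : ContinuousAt f (ψ z₁) :=
    (hfd'.differentiableAt (hDU'o.mem_nhds hwD)).continuousAt
  have hGz₁ : G z₁ = (f (ψ z₁))⁻¹ := by
    have h1 : Tendsto (fun k => g (τ k) z₁) atTop (𝓝 (G z₁)) :=
      hGTLU.tendsto_at hz₁
    have h2 : Tendsto (fun k => g (τ k) z₁) atTop (𝓝 ((f (ψ z₁))⁻¹)) := by
      have := (hfc.tendsto.comp (hptz z₁ (hballcb hz₁))).inv₀ hwne
      exact this
    exact tendsto_nhds_unique h1 h2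
  have hGz₁ne : G z₁ ≠ 0 := by
    rw [hGz₁]; exact inv_ne_zero hwne
  -- identity theorem: G is not identically 0 near z₀, so it is nonzero on a small sphere
  have hGan : AnalyticOnNhd ℂ G (ball z₀ r₂) := hGd.analyticOnNhd isOpen_ball
  have hne : ∀ᶠ z in 𝓝[≠] z₀, G z ≠ 0 := by
    rcases (hGan z₀ (mem_ball_self hr₂)).eventually_eq_zero_or_eventually_ne_zero with h0 | h1
    · exfalso
      have := hGan.eqOn_zero_of_preconnected_of_eventuallyEq_zero
        (convex_ball z₀ r₂).isPreconnected (mem_ball_self hr₂) h0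
      exact hGz₁ne (this hz₁)
    · exact h1
  rw [eventually_nhdsWithin_iff, Metric.eventually_nhds_iff] at hne
  obtain ⟨ρ', hρ', hρ'ne⟩ := hne
  set ρ : ℝ := min (ρ'/2) (r₂/2) with hρ_def
  have hρpos : 0 < ρ := lt_min (by linarith) (by linarith)
  have hρr₂ : ρ < r₂ := lt_of_le_of_lt (min_le_right _ _) (by linarith)
  have hsphsub : sphere z₀ ρ ⊆ ball z₀ r₂ := fun z hz => by
    rw [mem_sphere] at hz; rw [mem_ball, hz]; exact hρr₂
  have hsphne : ∀ z ∈ sphere z₀ ρ, G z ≠ 0 := by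
    intro z hz
    rw [mem_sphere] at hz
    refine hρ'ne ?_ ?_
    · rw [hz]; exact lt_of_le_of_lt (min_le_left _ _) (by linarith)
    · simp only [mem_compl_iff, mem_singleton_iff]
      intro h0
      rw [h0, dist_self] at hz
      exact hρpos.ne hz
  -- minimum of ‖G‖ on the sphere
  have hsphcomp : IsCompact (sphere z₀ ρ) := isCompact_sphere z₀ ρ
  have hsphnonempty : (sphere z₀ ρ).Nonempty :=
    NormedSpace.sphere_nonempty.mpr hρpos.le
  obtain ⟨ζ, hζsph, hζmin⟩ := hsphcomp.exists_isMinOn hsphnonempty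
    ((hGd.continuousOn.mono hsphsub).norm)
  set d : ℝ := ‖G ζ‖ with hd_def
  have hdpos : 0 < d := norm_pos_iff.mpr (hsphne ζ hζsph)
  -- choose k with uniform closeness on the sphere and smallness at z₀
  have hTUs : TendstoUniformlyOn (fun k => g (τ k)) G atTop (sphere z₀ ρ) :=
    (tendstoLocallyUniformlyOn_iff_forall_isCompact isOpen_ball).mp hGTLU
      (sphere z₀ ρ) hsphsub hsphcomp
  have hev1 : ∀ᶠ k in atTop, ∀ z ∈ sphere z₀ ρ, dist (g (τ k) z) (G z) < d/2 := by
    have := (Metric.tendstoUniformlyOn_iff.mp hTUs) (d/2) (by linarith)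
    filter_upwards [this] with k hk z hz using by rw [dist_comm]; exact hk z hz
  have hev2 : ∀ᶠ k in atTop, ‖g (τ k) z₀‖ < d/4 := by
    have h1 : Tendsto (fun k => g (τ k) z₀) atTop (𝓝 (G z₀)) :=
      hGTLU.tendsto_at (mem_ball_self hr₂)
    rw [hG0] at h1
    have := (tendsto_zero_iff_norm_tendsto_zero.mp h1).eventually_lt_const (by linarith : (0:ℝ) < d/4)
    exact this
  obtain ⟨k, hk1, hk2⟩ := (hev1.and hev2).exists
  -- maximum principle contradiction
  set Gk : ℂ → ℂ := fun z => f (φ (N + τ k) z) with hGk_def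
  have hGkd : DifferentiableOn ℂ Gk (ball z₀ r₂) := hcomp (τ k)
  have hclsub : closure (ball z₀ ρ) ⊆ ball z₀ r₂ := by
    rw [closure_ball z₀ hρpos.ne']
    exact closedBall_subset_ball hρr₂
  have hdiffcl : DiffContOnCl ℂ Gk (ball z₀ ρ) :=
    (hGkd.mono hclsub).diffContOnCl
  have hfrontier : ∀ z ∈ frontier (ball z₀ ρ), ‖Gk z‖ ≤ 2/d := by
    intro z hz
    rw [frontier_ball z₀ hρpos.ne'] at hz
    have hzball : z ∈ ball z₀ r₂ := hsphsub hz
    have hgnz : ‖g (τ k) z‖ ≥ d/2 := by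
      have h1 := hk1 z hz
      have h2 : d ≤ ‖G z‖ := hζmin hz
      have := norm_sub_norm_le (G z) (g (τ k) z)
      rw [← dist_eq_norm, dist_comm] at this
      linarith
    have hginv : Gk z = (g (τ k) z)⁻¹ := by
      simp only [hg_def, hGk_def, inv_inv]
    rw [hginv, norm_inv]
    have h0 : (0:ℝ) < d/2 := by positivity
    calc ‖g (τ k) z‖⁻¹ ≤ (d/2)⁻¹ := by
          apply inv_anti₀ h0 hgnz
    _ = 2/d := by rw [inv_div]
  have hmax : ‖Gk z₀‖ ≤ 2/d :=
    Complex.norm_le_of_forall_mem_frontier_norm_le isBounded_ball hdiffcl hfrontier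
      (subset_closure (mem_ball_self hρpos))
  have hGkz₀ : ‖g (τ k) z₀‖ = ‖Gk z₀‖⁻¹ := by
    simp only [hg_def, hGk_def, norm_inv]
  have h2le : 2 ≤ ‖Gk z₀‖ := hf2 _ (hmaps (τ k) (mem_closedBall_self hr₂.le))
  rw [hGkz₀] at hk2
  have hGkpos : 0 < ‖Gk z₀‖ := by linarith
  have hinv : (d/4)⁻¹ < ‖Gk z₀‖ := by
    have h1 : 0 < ‖Gk z₀‖⁻¹ := by positivity
    have := inv_strictAnti₀ h1 hk2
    rwa [inv_inv] at this
  rw [inv_div] at hinv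
  have hcontr : (4:ℝ)/d < 2/d := lt_of_lt_of_le hinv hmax
  rw [div_lt_div_iff₀ hdpos hdpos] at hcontr
  nlinarith

/-- Let `D ⊆ ℂⁿ` be a bounded domain such that every boundary point `a` has a neighborhood
`U_a` and a holomorphic function `f_a` on `D ∩ U_a` with `lim_{z → a} |f_a(z)| = ∞`. Then `D`
is taut: every sequence of holomorphic maps `𝔻 → D` admits a subsequence that either converges
locally uniformly on `𝔻` to a holomorphic map `𝔻 → D`, or is compactly divergent. -/
theorem taut_of_local_holomorphic_exhaustion
    {n : ℕ} (D : Set (EuclideanSpace ℂ (Fin n)))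
    (hD : IsOpen D ∧ IsConnected D) (hbd : Bornology.IsBounded D)
    (h : ∀ a ∈ frontier D, ∃ U : Set (EuclideanSpace ℂ (Fin n)), IsOpen U ∧ a ∈ U ∧
      ∃ f : EuclideanSpace ℂ (Fin n) → ℂ, DifferentiableOn ℂ f (D ∩ U) ∧
        Filter.Tendsto (fun z => ‖f z‖) (𝓝[D ∩ U] a) atTop) :
    ∀ φ : ℕ → ℂ → EuclideanSpace ℂ (Fin n),
      (∀ j, DifferentiableOn ℂ (φ j) (ball (0 : ℂ) 1) ∧
        MapsTo (φ j) (ball (0 : ℂ) 1) D) →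
      ∃ σ : ℕ → ℕ, StrictMono σ ∧
        ((∃ ψ : ℂ → EuclideanSpace ℂ (Fin n),
            DifferentiableOn ℂ ψ (ball (0 : ℂ) 1) ∧ MapsTo ψ (ball (0 : ℂ) 1) D ∧
            TendstoLocallyUniformlyOn (fun j => φ (σ j)) ψ atTop (ball (0 : ℂ) 1)) ∨
          (∀ K : Set ℂ, K ⊆ ball (0 : ℂ) 1 → IsCompact K →
            ∀ L : Set (EuclideanSpace ℂ (Fin n)), L ⊆ D → IsCompact L →
              ∀ᶠ j in atTop, ∀ x ∈ K, φ (σ j) x ∉ L)) := by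
  obtain ⟨hDopen, hDconn⟩ := hD
  intro φ hφ
  obtain ⟨M, hM⟩ := isBounded_iff_forall_norm_le.mp hbd
  obtain ⟨σ, hσ, ψ, hTLU⟩ := montel (0:ℂ) one_pos φ (fun j => (hφ j).1)
    (fun j z hz => hM _ ((hφ j).2 hz))
  have hφd' : ∀ j, DifferentiableOn ℂ (φ (σ j)) (ball (0:ℂ) 1) := fun j => (hφ (σ j)).1
  have hφD' : ∀ j, MapsTo (φ (σ j)) (ball (0:ℂ) 1) D := fun j => (hφ (σ j)).2
  have hψd : DifferentiableOn ℂ ψ (ball (0:ℂ) 1) :=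
    hTLU.differentiableOn (Eventually.of_forall hφd') isOpen_ball
  refine ⟨σ, hσ, ?_⟩
  by_cases hcase : ∀ z ∈ ball (0:ℂ) 1, ψ z ∈ D
  · exact Or.inl ⟨ψ, hψd, fun z hz => hcase z hz, hTLU⟩
  · push_neg at hcase
    obtain ⟨z₀, hz₀, hz₀D⟩ := hcase
    -- ψ never takes values in D
    have hψnD : ∀ z ∈ ball (0:ℂ) 1, ψ z ∉ D := by
      set u : Set ℂ := {z | ∃ ρ > 0, ball z ρ ⊆ ball (0:ℂ) 1 ∧ ∀ y ∈ ball z ρ, ψ y ∉ D}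
        with hu_def
      set v : Set ℂ := ball (0:ℂ) 1 ∩ ψ ⁻¹' D with hv_def
      have huo : IsOpen u := by
        rw [Metric.isOpen_iff]
        rintro z ⟨ρ, hρ, hsub, hz⟩
        refine ⟨ρ, hρ, fun z' hz' => ?_⟩
        have hρ' : 0 < ρ - dist z' z := by
          rw [mem_ball] at hz'; linarith
        refine ⟨ρ - dist z' z, hρ', ?_, ?_⟩
        · exact (ball_subset_ball' (by linarith)).trans hsub
        · intro y hy
          exact hz y (ball_subset_ball' (by linarith) hy)
      have hvo : IsOpen v :=
        hψd.continuousOn.isOpen_inter_preimage isOpen_ball hDopen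
      have hdisj : Disjoint u v := by
        rw [Set.disjoint_left]
        rintro z ⟨ρ, hρ, _, hz⟩ hzv
        exact hz z (mem_ball_self hρ) hzv.2
      have hsubuv : ball (0:ℂ) 1 ⊆ u ∪ v := by
        intro z hz
        by_cases hzD : ψ z ∈ D
        · exact Or.inr ⟨hz, hzD⟩
        · obtain ⟨ρ, hρ, hb, hnd⟩ := key_frontier_step hDopen h hφd' hφD' hTLU hz hzD
          exact Or.inl ⟨ρ, hρ, hb, hnd⟩
      have hz₀u : z₀ ∈ u := by
        obtain ⟨ρ, hρ, hb, hnd⟩ := key_frontier_step hDopen h hφd' hφD' hTLU hz₀ hz₀D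
        exact ⟨ρ, hρ, hb, hnd⟩
      have := (convex_ball (0:ℂ) 1).isPreconnected.subset_left_of_subset_union
        huo hvo hdisj hsubuv ⟨z₀, hz₀, hz₀u⟩
      intro z hz
      obtain ⟨ρ, hρ, _, hnd⟩ := this hz
      exact hnd z (mem_ball_self hρ)
    refine Or.inr fun K hK hKc L hLD hLc => ?_
    have hTUK : TendstoUniformlyOn (fun j => φ (σ j)) ψ atTop K :=
      (tendstoLocallyUniformlyOn_iff_forall_isCompact isOpen_ball).mp hTLU K hK hKc
    have hψK : IsCompact (ψ '' K) := hKc.image_of_continuousOn (hψd.continuousOn.mono hK)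
    have hLO : L ⊆ (ψ '' K)ᶜ := by
      rintro x hxL ⟨z, hzK, rfl⟩
      exact hψnD z (hK hzK) (hLD hxL)
    obtain ⟨δ, hδ, hthick⟩ := hLc.exists_thickening_subset_open
      hψK.isClosed.isOpen_compl hLO
    have hev : ∀ᶠ j in atTop, ∀ x ∈ K, dist (φ (σ j) x) (ψ x) < δ := by
      have := (Metric.tendstoUniformlyOn_iff.mp hTUK) δ hδ
      filter_upwards [this] with j hj x hx using by rw [dist_comm]; exact hj x hx
    filter_upwards [hev] with j hj x hxK hxL
    have : ψ x ∈ thickening δ L := by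
      rw [Metric.mem_thickening_iff]
      exact ⟨φ (σ j) x, hxL, by rw [dist_comm]; exact hj x hxK⟩
    exact hthick this (mem_image_of_mem ψ hxK)
end

section
/- Let D ⊂ ℂⁿ be a bounded domain such that for every boundary point a ∈ ∂D there exist a neighborhood U_a of a and a holomorphic function f_a on D ∩ U_a with lim_{z→a} |f_a(z)| = ∞. If ψ_j : 𝔻 → D are holomorphic maps converging locally uniformly on 𝔻 to a map ψ : 𝔻 → ℂⁿ, and ψ(ζ) ∈ ∂D for some ζ ∈ 𝔻, then ψ(𝔻) ⊂ ∂D. -/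
open Complex Filter Metric Set
open scoped Topology

private lemma exists_primitive {v : ℂ → ℂ} {c : ℂ} {R : NNReal} (hR : 0 < R)
    (hv : DifferentiableOn ℂ v (closedBall (c : ℂ) R)) :
    ∃ φ : ℂ → ℂ, ∀ z ∈ ball (c : ℂ) (R : ℝ), HasDerivAt φ (v z) z := by
  set p := cauchyPowerSeries v c R with hpdef
  have hps : HasFPowerSeriesOnBall v p c R := hv.hasFPowerSeriesOnBall hR
  set a : ℕ → ℂ := fun n => p.coeff n with ha
  refine ⟨fun z => ∑' m, (a m / (m + 1)) * (z - c) ^ (m + 1), ?_⟩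
  intro z hz
  rw [mem_ball] at hz
  obtain ⟨ρ, hρ0, hρ1, hρ2⟩ : ∃ ρ : NNReal, 0 < (ρ:ℝ) ∧ dist z c < ρ ∧ (ρ : ℝ) < R := by
    refine ⟨⟨(dist z c + R) / 2, by positivity⟩, ?_, ?_, ?_⟩ <;>
      dsimp only [NNReal.toReal] at hz ⊢ <;> [linarith [dist_nonneg (x := z) (y := c)]; linarith [dist_nonneg (x := z) (y := c)]; linarith]
  have hrad : (ρ : ENNReal) < p.radius := lt_of_lt_of_le (by exact_mod_cast hρ2) hps.r_le
  have hsum : Summable fun m : ℕ => ‖p m‖ * (ρ : ℝ) ^ m := p.summable_norm_mul_pow hrad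
  have hg : ∀ (m : ℕ) (y : ℂ), y ∈ ball c (ρ : ℝ) →
      HasDerivAt (fun y => (a m / (m + 1)) * (y - c) ^ (m + 1)) (a m * (y - c) ^ m) y := by
    intro m y _
    have h1 : HasDerivAt (fun y : ℂ => (y - c) ^ (m + 1))
        ((m + 1 : ℕ) * (y - c) ^ m * 1) y := by
      simpa using (((hasDerivAt_id y).sub_const c).fun_pow (m + 1))
    have := h1.const_mul (a m / (m + 1))
    convert this using 1
    · rfl
    · rfl
    have hm : ((m : ℂ) + 1) ≠ 0 := Nat.cast_add_one_ne_zero m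
    push_cast
    field_simp
  have hg' : ∀ (m : ℕ) (y : ℂ), y ∈ ball c (ρ : ℝ) →
      ‖a m * (y - c) ^ m‖ ≤ ‖p m‖ * (ρ : ℝ) ^ m := by
    intro m y hy
    rw [mem_ball] at hy
    have hcoeff : ‖a m‖ ≤ ‖p m‖ := by
      calc ‖a m‖ = ‖p m fun _ => (1 : ℂ)‖ := rfl
        _ ≤ ‖p m‖ * ∏ _i : Fin m, ‖(1 : ℂ)‖ := (p m).le_opNorm _
        _ = ‖p m‖ := by simp
    calc ‖a m * (y - c) ^ m‖ = ‖a m‖ * ‖y - c‖ ^ m := by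
          rw [norm_mul, norm_pow]
      _ ≤ ‖p m‖ * (ρ : ℝ) ^ m :=
          mul_le_mul hcoeff (pow_le_pow_left₀ (norm_nonneg _)
            (le_of_lt (by rwa [← dist_eq_norm])) m) (by positivity) (norm_nonneg _)
  have hg0 : Summable fun m : ℕ => (a m / (m + 1)) * (c - c) ^ (m + 1) := by
    simpa using summable_zero
  have hder := hasDerivAt_tsum_of_isPreconnected hsum isOpen_ball
    (convex_ball c (ρ : ℝ)).isPreconnected hg hg'
    (mem_ball_self hρ0) hg0 (mem_ball.2 hρ1)
  have hvz : HasSum (fun m => a m * (z - c) ^ m) (v z) := by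
    have hmem : z - c ∈ Metric.eball (0 : ℂ) (R : ENNReal) := by
      rw [Metric.mem_eball, edist_zero_right]
      have hlt : ‖z - c‖ < (R : ℝ) := by rw [← dist_eq_norm]; exact lt_trans hρ1 hρ2
      exact_mod_cast hlt
    have := hps.hasSum hmem
    simp only [FormalMultilinearSeries.apply_eq_pow_smul_coeff, smul_eq_mul] at this
    simpa [mul_comm, add_sub_cancel] using this
  rw [← hvz.tsum_eq]
  exact hder


private lemma mobius_sq_eq (p q : ℂ) :
    ‖q - p‖ ^ 2 = ‖q + (starRingEnd ℂ) p‖ ^ 2 - 4 * q.re * p.re := by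
  rw [Complex.sq_norm, Complex.sq_norm,
    Complex.normSq_apply, Complex.normSq_apply]
  simp only [Complex.sub_re, Complex.sub_im, Complex.add_re, Complex.add_im,
    Complex.conj_re, Complex.conj_im]
  ring

private lemma mobius_denom_ne (p q : ℂ) (hp : p.re < 0) (hq : q.re < 0) :
    q + (starRingEnd ℂ) p ≠ 0 := by
  intro h
  have : (q + (starRingEnd ℂ) p).re = 0 := by rw [h]; simp
  simp only [Complex.add_re, Complex.conj_re] at this
  linarith

private lemma mobius_lt_one (p q : ℂ) (hp : p.re < 0) (hq : q.re < 0) :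
    ‖(q - p) / (q + (starRingEnd ℂ) p)‖ < 1 := by
  rw [norm_div, div_lt_one (norm_pos_iff.mpr (mobius_denom_ne p q hp hq))]
  have h := mobius_sq_eq p q
  nlinarith [norm_nonneg (q - p), norm_nonneg (q + (starRingEnd ℂ) p),
    mul_pos (neg_pos.mpr hq) (neg_pos.mpr hp)]

private lemma harnack_arith {A B pr qr k : ℝ} (hA0 : 0 ≤ A) (hB0 : 0 ≤ B)
    (hp : pr < 0) (hq : qr < 0) (hk0 : 0 ≤ k) (hk1 : k < 1)
    (h2 : A ≤ k * B) (hid : A ^ 2 = B ^ 2 - 4 * qr * pr) (habs : -(qr + pr) ≤ B) :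
    qr ≤ (1 - k ^ 2) / 4 * pr := by
  have hA2 : A ^ 2 ≤ k ^ 2 * B ^ 2 := by nlinarith
  have h5 : (1 - k ^ 2) * B ^ 2 ≤ 4 * qr * pr := by nlinarith
  have hBge : -pr ≤ B := by linarith
  have hB2 : pr ^ 2 ≤ B ^ 2 := by nlinarith
  have h6 : (1 - k ^ 2) * pr ^ 2 ≤ 4 * qr * pr := by
    nlinarith [mul_nonneg (by nlinarith : (0:ℝ) ≤ 1 - k ^ 2) (by linarith : (0:ℝ) ≤ B ^ 2 - pr ^ 2)]
  nlinarith [mul_pos (neg_pos.2 hp) (neg_pos.2 hp)]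

set_option maxHeartbeats 1000000 in
private lemma harnack_bound {ξ0 ξ1 : ℂ} {r : ℝ} (hr : 0 < r) (hξ1 : ξ1 ∈ ball ξ0 r) :
    ∃ c : ℝ, 0 < c ∧ ∀ u : ℂ → ℂ, DifferentiableOn ℂ u (closedBall ξ0 r) →
      (∀ z ∈ closedBall ξ0 r, u z ≠ 0) → (∀ z ∈ closedBall ξ0 r, ‖u z‖ < 1) →
      ‖u ξ1‖ ≤ ‖u ξ0‖ ^ c := by
  have hd : dist ξ1 ξ0 < r := mem_ball.1 hξ1
  have hd0 : 0 ≤ dist ξ1 ξ0 := dist_nonneg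
  set d := dist ξ1 ξ0 with hddef
  set ρ : ℝ := (d + r) / 2 with hρdef
  have hρ0 : 0 < ρ := by positivity
  have hdρ : d < ρ := by rw [hρdef]; linarith
  have hρr : ρ < r := by rw [hρdef]; linarith
  set ρ2 : ℝ := (ρ + r) / 2 with hρ2def
  have hρ20 : 0 < ρ2 := by positivity
  have hρρ2 : ρ < ρ2 := by rw [hρ2def]; linarith
  have hρ2r : ρ2 < r := by rw [hρ2def]; linarith
  set k : ℝ := d / ρ with hkdef
  have hk0 : 0 ≤ k := by positivity
  have hk1 : k < 1 := by rw [hkdef, div_lt_one hρ0]; exact hdρ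
  refine ⟨(1 - k ^ 2) / 4, by nlinarith, ?_⟩
  intro u hud hne hlt
  have hball : DifferentiableOn ℂ u (ball ξ0 r) := hud.mono ball_subset_closedBall
  have hder : DifferentiableOn ℂ (deriv u) (ball ξ0 r) :=
    ((hball.analyticOnNhd isOpen_ball).deriv).differentiableOn
  have hsub2 : closedBall ξ0 ρ2 ⊆ ball ξ0 r := closedBall_subset_ball hρ2r
  have hsub2' : ball ξ0 ρ2 ⊆ closedBall ξ0 r :=
    fun z hz => ball_subset_closedBall (hsub2 (ball_subset_closedBall hz))
  have hv : DifferentiableOn ℂ (fun z => deriv u z / u z) (closedBall ξ0 ρ2) :=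
    (hder.mono hsub2).div (hball.mono hsub2)
      (fun z hz => hne z (ball_subset_closedBall (hsub2 hz)))
  obtain ⟨φ0, hφ0⟩ := exists_primitive (R := ⟨ρ2, hρ20.le⟩) (by exact_mod_cast hρ20) hv
  set φ : ℂ → ℂ := fun z => φ0 z + (Complex.log (u ξ0) - φ0 ξ0) with hφdef
  have hξ0mem : ξ0 ∈ ball ξ0 ρ2 := mem_ball_self hρ20
  have hu0 : u ξ0 ≠ 0 := hne ξ0 (mem_closedBall_self hr.le)
  set F : ℂ → ℂ := fun z => u z * Complex.exp (-φ0 z) with hFdef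
  have hF : ∀ z ∈ ball ξ0 ρ2, HasDerivAt F 0 z := by
    intro z hz
    have hz' : z ∈ ball ξ0 r := ball_subset_ball hρ2r.le hz
    have hu' : HasDerivAt u (deriv u z) z :=
      (hball.differentiableAt (isOpen_ball.mem_nhds hz')).hasDerivAt
    have hE : HasDerivAt (fun w => Complex.exp (-φ0 w))
        (Complex.exp (-φ0 z) * -(deriv u z / u z)) z := by
      simpa [mul_comm] using ((hφ0 z hz).neg).cexp
    have hz0 : u z ≠ 0 := hne z (ball_subset_closedBall hz')
    convert hu'.fun_mul hE using 1
    · rfl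
    · rfl
    field_simp
    ring
  have hFconst : ∀ z ∈ ball ξ0 ρ2, F z = F ξ0 := by
    intro z hz
    refine (convex_ball ξ0 ρ2).is_const_of_fderivWithin_eq_zero (𝕜 := ℂ)
      (fun w hw => ((hF w hw).differentiableAt).differentiableWithinAt) ?_ hz hξ0mem
    intro w hw
    rw [fderivWithin_of_isOpen isOpen_ball hw, ((hF w hw).hasFDerivAt).fderiv]
    ext x
    simp
  have hexp : ∀ z ∈ ball ξ0 ρ2, Complex.exp (φ z) = u z := by
    intro z hz
    have h1 : u z * Complex.exp (-φ0 z) = u ξ0 * Complex.exp (-φ0 ξ0) := hFconst z hz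
    rw [Complex.exp_neg, Complex.exp_neg] at h1
    rw [hφdef]
    simp only []
    rw [Complex.exp_add, Complex.exp_sub, Complex.exp_log hu0]
    have h2 := Complex.exp_ne_zero (φ0 z)
    have h3 := Complex.exp_ne_zero (φ0 ξ0)
    field_simp at h1 ⊢
    linear_combination -h1
  have hre : ∀ z ∈ ball ξ0 ρ2, (φ z).re < 0 := by
    intro z hz
    have h1 : ‖u z‖ < 1 := hlt z (hsub2' hz)
    rw [← hexp z hz, Complex.norm_exp] at h1
    exact Real.exp_lt_one_iff.mp h1
  have hξ1ρ2 : ξ1 ∈ ball ξ0 ρ2 := mem_ball.2 (lt_trans hdρ hρρ2)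
  have hξ1ρ : ξ1 ∈ ball ξ0 ρ := mem_ball.2 hdρ
  set p : ℂ := φ ξ0 with hpdef
  set q : ℂ := φ ξ1 with hqdef
  have hp : p.re < 0 := hre ξ0 hξ0mem
  have hq : q.re < 0 := hre ξ1 hξ1ρ2
  set G : ℂ → ℂ := fun z => (φ z - p) / (φ z + (starRingEnd ℂ) p) with hGdef
  have hsubρ : ball ξ0 ρ ⊆ ball ξ0 ρ2 := ball_subset_ball hρρ2.le
  have hφdiff : DifferentiableOn ℂ φ (ball ξ0 ρ2) := fun z hz =>
    (((hφ0 z hz).differentiableAt).add_const _).differentiableWithinAt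
  have hGdiff : DifferentiableOn ℂ G (ball ξ0 ρ) :=
    ((hφdiff.mono hsubρ).sub_const p).div ((hφdiff.mono hsubρ).add_const _)
      (fun z hz => mobius_denom_ne p (φ z) hp (hre z (hsubρ hz)))
  have hG0 : G ξ0 = 0 := by rw [hGdef]; simp [← hpdef]
  have hmaps : MapsTo G (ball ξ0 ρ) (ball (G ξ0) 1) := by
    intro z hz
    rw [hG0, mem_ball, dist_zero_right]
    exact mobius_lt_one p (φ z) hp (hre z (hsubρ hz))
  have hschwarz := Complex.dist_le_div_mul_dist_of_mapsTo_ball hGdiff (hmaps.mono_right ball_subset_closedBall) hξ1ρ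
  rw [hG0, dist_zero_right] at hschwarz
  have hGk : ‖G ξ1‖ ≤ k := by
    calc ‖G ξ1‖ ≤ 1 / ρ * d := hschwarz
    _ = k := by rw [hkdef]; ring
  have hden := mobius_denom_ne p q hp hq
  have h2 : ‖q - p‖ ≤ k * ‖q + (starRingEnd ℂ) p‖ := by
    have : ‖G ξ1‖ = ‖q - p‖ / ‖q + (starRingEnd ℂ) p‖ := by rw [hGdef]; simp [norm_div, ← hqdef]
    rw [this, div_le_iff₀ (norm_pos_iff.mpr hden)] at hGk
    exact hGk
  have hid := mobius_sq_eq p q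
  have habs : -(q.re + p.re) ≤ ‖q + (starRingEnd ℂ) p‖ := by
    calc -(q.re + p.re) ≤ |(q + (starRingEnd ℂ) p).re| := by
          simp only [Complex.add_re, Complex.conj_re]
          exact neg_le_abs _
    _ ≤ ‖q + (starRingEnd ℂ) p‖ := by
          exact Complex.abs_re_le_norm _
  have hqc : q.re ≤ (1 - k ^ 2) / 4 * p.re :=
    harnack_arith (norm_nonneg _) (norm_nonneg _) hp hq hk0 hk1 h2 hid habs
  have hupos : 0 < ‖u ξ0‖ := norm_pos_iff.mpr hu0
  have h3 : ‖u ξ1‖ = Real.exp q.re := by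
    rw [← hexp ξ1 hξ1ρ2, Complex.norm_exp]
  have h4 : ‖u ξ0‖ = Real.exp p.re := by
    rw [← hexp ξ0 hξ0mem, Complex.norm_exp]
  rw [h3, Real.rpow_def_of_pos hupos, h4, Real.log_exp]
  exact Real.exp_le_exp.mpr (by linarith [hqc])



set_option maxHeartbeats 1000000 in
/-- Let `D ⊆ ℂⁿ` be a bounded domain such that every boundary point `a` has a neighborhood
`U_a` and a holomorphic function `f_a` on `D ∩ U_a` with `lim_{z → a} |f_a(z)| = ∞`. If
holomorphic maps `ψ_j : 𝔻 → D` converge locally uniformly on `𝔻` to `ψ`, and `ψ(ζ) ∈ ∂D` for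
some `ζ ∈ 𝔻`, then `ψ(𝔻) ⊆ ∂D`. -/
theorem limit_map_into_boundary
    {n : ℕ} (D : Set (EuclideanSpace ℂ (Fin n)))
    (hD : IsOpen D ∧ IsConnected D) (hbd : Bornology.IsBounded D)
    (h : ∀ a ∈ frontier D, ∃ U : Set (EuclideanSpace ℂ (Fin n)), IsOpen U ∧ a ∈ U ∧
      ∃ f : EuclideanSpace ℂ (Fin n) → ℂ, DifferentiableOn ℂ f (D ∩ U) ∧
        Filter.Tendsto (fun z => ‖f z‖) (𝓝[D ∩ U] a) atTop)
    (ψ : ℕ → ℂ → EuclideanSpace ℂ (Fin n))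
    (hψ : ∀ j, DifferentiableOn ℂ (ψ j) (ball (0 : ℂ) 1) ∧
      MapsTo (ψ j) (ball (0 : ℂ) 1) D)
    (ψlim : ℂ → EuclideanSpace ℂ (Fin n))
    (hconv : TendstoLocallyUniformlyOn ψ ψlim atTop (ball (0 : ℂ) 1))
    (ζ : ℂ) (hζ : ζ ∈ ball (0 : ℂ) 1) (hbdry : ψlim ζ ∈ frontier D) :
    ∀ ξ ∈ ball (0 : ℂ) 1, ψlim ξ ∈ frontier D := by
    classical
  have hDopen : IsOpen D := hD.1
  set B : Set ℂ := ball (0 : ℂ) 1 with hBdef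
  have hBopen : IsOpen B := isOpen_ball
  have hcontlim : ContinuousOn ψlim B :=
    hconv.continuousOn (Filter.Eventually.of_forall fun j => ((hψ j).1.continuousOn)).frequently
  have hptwise : ∀ ξ ∈ B, Tendsto (fun j => ψ j ξ) atTop (𝓝 (ψlim ξ)) :=
    fun ξ hξ => hconv.tendsto_at hξ
  have hclos : ∀ ξ ∈ B, ψlim ξ ∈ closure D := fun ξ hξ =>
    mem_closure_of_tendsto (hptwise ξ hξ) (Filter.Eventually.of_forall fun j => (hψ j).2 hξ)
  have huc : ∀ K, K ⊆ B → IsCompact K → TendstoUniformlyOn ψ ψlim atTop K :=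
    (tendstoLocallyUniformlyOn_iff_forall_isCompact hBopen).mp hconv
  have key : ∀ ξ0 ∈ B, ψlim ξ0 ∈ frontier D →
      ∃ ε > 0, ball ξ0 ε ⊆ B ∧ ∀ η ∈ ball ξ0 ε, ψlim η ∈ frontier D := by
    intro ξ0 hξ0 hfr0
    obtain ⟨U, hUopen, haU, f, hfdiff, htend⟩ := h _ hfr0
    have hev : ∀ᶠ z in 𝓝 (ψlim ξ0), z ∈ D ∩ U → 2 ≤ ‖f z‖ := by
      have := htend.eventually (Filter.eventually_ge_atTop 2)
      rwa [eventually_nhdsWithin_iff] at this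
    obtain ⟨W, hWsub, hWopen, haW⟩ := _root_.eventually_nhds_iff.mp hev
    set U' : Set (EuclideanSpace ℂ (Fin n)) := W ∩ U with hU'def
    have hU'open : IsOpen U' := hWopen.inter hUopen
    have haU' : ψlim ξ0 ∈ U' := ⟨haW, haU⟩
    have hU'f : ∀ z ∈ D ∩ U', 2 ≤ ‖f z‖ := fun z hz => hWsub z hz.2.1 ⟨hz.1, hz.2.2⟩
    have hU'U : U' ⊆ U := inter_subset_right
    have hcont0 : ContinuousAt ψlim ξ0 := hcontlim.continuousAt (hBopen.mem_nhds hξ0)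
    have hnhds : ψlim ⁻¹' U' ∈ 𝓝 ξ0 := hcont0.preimage_mem_nhds (hU'open.mem_nhds haU')
    obtain ⟨r0, hr0, hball0⟩ :=
      Metric.mem_nhds_iff.mp (Filter.inter_mem hnhds (hBopen.mem_nhds hξ0))
    set r : ℝ := r0 / 2 with hrdef
    have hr : 0 < r := by positivity
    have hcbsub : closedBall ξ0 r ⊆ ball ξ0 r0 := by
      apply closedBall_subset_ball; rw [hrdef]; linarith
    have hsubB : closedBall ξ0 r ⊆ B := fun x hx => (hball0 (hcbsub hx)).2
    have hsubU' : ∀ x ∈ closedBall ξ0 r, ψlim x ∈ U' := fun x hx => (hball0 (hcbsub hx)).1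
    have hKcomp : IsCompact (ψlim '' closedBall ξ0 r) :=
      (isCompact_closedBall ξ0 r).image_of_continuousOn (hcontlim.mono hsubB)
    have hKU' : ψlim '' closedBall ξ0 r ⊆ U' := by rintro _ ⟨x, hx, rfl⟩; exact hsubU' x hx
    obtain ⟨δ, hδ, hthick⟩ := hKcomp.exists_thickening_subset_open hU'open hKU'
    have hunif := huc _ hsubB (isCompact_closedBall ξ0 r)
    have hevU' : ∀ᶠ j in atTop, ∀ x ∈ closedBall ξ0 r, ψ j x ∈ U' := by
      filter_upwards [(Metric.tendstoUniformlyOn_iff.mp hunif) δ hδ] with j hj x hx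
      refine hthick (Metric.mem_thickening_iff.mpr ⟨ψlim x, ⟨x, hx, rfl⟩, ?_⟩)
      rw [dist_comm]; exact hj x hx
    have hξ0cb : ξ0 ∈ closedBall ξ0 r := mem_closedBall_self hr.le
    have hpt0 : Tendsto (fun j => ψ j ξ0) atTop (𝓝 (ψlim ξ0)) := hptwise ξ0 hξ0
    have hmemDU : ∀ᶠ j in atTop, ψ j ξ0 ∈ D ∩ U := by
      filter_upwards [hevU'] with j hj
      exact ⟨(hψ j).2 hξ0, hU'U (hj ξ0 hξ0cb)⟩
    have hfat : Tendsto (fun j => ‖f (ψ j ξ0)‖) atTop atTop :=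
      htend.comp (tendsto_nhdsWithin_iff.mpr ⟨hpt0, hmemDU⟩)
    refine ⟨r, hr, (ball_subset_closedBall).trans hsubB, ?_⟩
    intro η hη
    have hηB : η ∈ B := hsubB (ball_subset_closedBall hη)
    have hηclos : ψlim η ∈ closure D := hclos η hηB
    rw [hDopen.frontier_eq]
    refine ⟨hηclos, ?_⟩
    intro hηD
    have hηU' : ψlim η ∈ U' := hsubU' η (ball_subset_closedBall hη)
    set w : ℂ := f (ψlim η) with hwdef
    have hfc : ContinuousAt f (ψlim η) :=
      hfdiff.continuousOn.continuousAt ((hDopen.inter hUopen).mem_nhds ⟨hηD, hU'U hηU'⟩)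
    have hptη : Tendsto (fun j => ψ j η) atTop (𝓝 (ψlim η)) := hptwise η hηB
    have htendw : Tendsto (fun j => f (ψ j η)) atTop (𝓝 w) := hfc.tendsto.comp hptη
    obtain ⟨c, hc, hharnack⟩ := harnack_bound hr hη
    have ht1 : Tendsto (fun j => ‖f (ψ j ξ0)‖⁻¹ ^ c) atTop (𝓝 0) := by
      have h0 : Tendsto (fun j => ‖f (ψ j ξ0)‖⁻¹) atTop (𝓝 0) :=
        tendsto_inv_atTop_zero.comp hfat
      have := h0.rpow_const (Or.inr hc.le)
      rwa [Real.zero_rpow hc.ne'] at this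
    have hev2 : ∀ᶠ j in atTop, ‖f (ψ j ξ0)‖⁻¹ ^ c < (‖w‖ + 1)⁻¹ :=
      ht1.eventually_lt_const (by positivity)
    have hev3 : ∀ᶠ j in atTop, ‖f (ψ j η)‖ < ‖w‖ + 1 :=
      (htendw.norm).eventually_lt_const (by linarith)
    obtain ⟨j, hjU', hj2, hj3⟩ := (hevU'.and (hev2.and hev3)).exists
    have hψjd : DifferentiableOn ℂ (ψ j) (closedBall ξ0 r) := (hψ j).1.mono hsubB
    have hmapsDU' : ∀ x ∈ closedBall ξ0 r, ψ j x ∈ D ∩ U' :=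
      fun x hx => ⟨(hψ j).2 (hsubB hx), hjU' x hx⟩
    have hfjd : DifferentiableOn ℂ (fun z => f (ψ j z)) (closedBall ξ0 r) :=
      hfdiff.comp hψjd
        (fun x hx => ⟨(hmapsDU' x hx).1, hU'U (hmapsDU' x hx).2⟩)
    have hge2 : ∀ x ∈ closedBall ξ0 r, 2 ≤ ‖f (ψ j x)‖ :=
      fun x hx => hU'f _ (hmapsDU' x hx)
    have hfne : ∀ x ∈ closedBall ξ0 r, f (ψ j x) ≠ 0 := by
      intro x hx h0
      have := hge2 x hx
      rw [h0, norm_zero] at this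
      linarith
    set u : ℂ → ℂ := fun z => (f (ψ j z))⁻¹ with hudef
    have hudiff : DifferentiableOn ℂ u (closedBall ξ0 r) := hfjd.inv hfne
    have hune : ∀ z ∈ closedBall ξ0 r, u z ≠ 0 := fun z hz => inv_ne_zero (hfne z hz)
    have hult : ∀ z ∈ closedBall ξ0 r, ‖u z‖ < 1 := by
      intro z hz
      rw [hudef]
      simp only [norm_inv]
      have h2z := hge2 z hz
      rw [inv_lt_one_iff₀]
      right; linarith
    have hkey := hharnack u hudiff hune hult
    have e1 : ‖u η‖ = ‖f (ψ j η)‖⁻¹ := by rw [hudef]; simp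
    have e0 : ‖u ξ0‖ = ‖f (ψ j ξ0)‖⁻¹ := by rw [hudef]; simp
    rw [e1, e0] at hkey
    have hfpos : 0 < ‖f (ψ j η)‖ := by
      linarith [hge2 η (ball_subset_closedBall hη)]
    have hlo : (‖w‖ + 1)⁻¹ < ‖f (ψ j η)‖⁻¹ := by
      apply inv_strictAnti₀ hfpos hj3
    linarith
  set v : Set ℂ := B ∩ ψlim ⁻¹' D with hvdef
  have hvopen : IsOpen v := hcontlim.isOpen_inter_preimage hBopen hDopen
  set uset : Set ℂ := {ξ | ∀ᶠ η in 𝓝 ξ, η ∈ B ∧ ψlim η ∈ frontier D} with husdef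
  have huopen : IsOpen uset := isOpen_setOf_eventually_nhds
  have hdisj : Disjoint uset v := by
    rw [Set.disjoint_left]
    intro ξ hξu hξv
    have h1 : ψlim ξ ∈ frontier D := (hξu.self_of_nhds).2
    rw [hDopen.frontier_eq] at h1
    exact h1.2 hξv.2
  have hcover : B ⊆ uset ∪ v := by
    intro ξ hξ
    by_cases hmem : ψlim ξ ∈ D
    · exact Or.inr ⟨hξ, hmem⟩
    · left
      have hfr : ψlim ξ ∈ frontier D := by
        rw [hDopen.frontier_eq]; exact ⟨hclos ξ hξ, hmem⟩
      obtain ⟨ε, hε, hsub, hfr'⟩ := key ξ hξ hfr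
      exact Filter.eventually_of_mem (ball_mem_nhds ξ hε) (fun η hη => ⟨hsub hη, hfr' η hη⟩)
  have hBne : (B ∩ uset).Nonempty := by
    obtain ⟨ε, hε, hsub, hfr'⟩ := key ζ hζ hbdry
    exact ⟨ζ, hζ, Filter.eventually_of_mem (ball_mem_nhds ζ hε)
      (fun η hη => ⟨hsub hη, hfr' η hη⟩)⟩
  have hfinal : B ⊆ uset :=
    ((convex_ball (0:ℂ) 1).isPreconnected).subset_left_of_subset_union
      huopen hvopen hdisj hcover hBne
  intro ξ hξ
  exact ((hfinal hξ).self_of_nhds).2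
end

section
/- Let D ⊂ ℝⁿ be a domain such that for every boundary point a ∈ ∂D there exist a neighborhood U_a of a and a function u_a : D ∩ U_a → ℝ which is convex along segments (i.e. for every segment [x,y] ⊆ D ∩ U_a and t ∈ [0,1], u_a(tx+(1−t)y) ≤ t·u_a(x) + (1−t)·u_a(y)) and satisfies lim_{z→a} u_a(z) = ∞. Then D is convex. -/
open Filter Set
open scoped Topology

private lemma key_f_ineq {δ η x y c μ : ℝ} (hδ0 : 0 ≤ δ) (hδ1 : δ ≤ 1) (hη : 0 ≤ η)
    (hμ : μ = δ * y - x) : δ * (y + c + η * δ) - (x + c * δ + η) ≤ μ := by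
  have hsq : δ * δ ≤ 1 := by nlinarith
  have h1 : η * (δ * δ) ≤ η * 1 := mul_le_mul_of_nonneg_left hsq hη
  nlinarith [h1]

private lemma key_f_ineq_strict {δ η x y c μ : ℝ} (hδ0 : 0 ≤ δ) (hδ1 : δ < 1) (hη : 0 < η)
    (hμ : μ = δ * y - x) : δ * (y + c + η * δ) - (x + c * δ + η) < μ := by
  have hsq : δ * δ < 1 := by nlinarith
  have h1 : η * (δ * δ) < η * 1 := by
    apply mul_lt_mul_of_pos_left hsq hη
  nlinarith [h1]

set_option maxHeartbeats 6000000 in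
private lemma tri_step {n : ℕ} {D : Set (EuclideanSpace ℝ (Fin n))}
    (hDo : IsOpen D)
    (h : ∀ a ∈ frontier D, ∃ U : Set (EuclideanSpace ℝ (Fin n)), IsOpen U ∧ a ∈ U ∧
      ∃ u : EuclideanSpace ℝ (Fin n) → ℝ,
        (∀ x ∈ D ∩ U, ∀ y ∈ D ∩ U, segment ℝ x y ⊆ D ∩ U →
          ∀ t : ℝ, t ∈ Set.Icc (0 : ℝ) 1 →
            u (t • x + (1 - t) • y) ≤ t * u x + (1 - t) * u y) ∧
        Filter.Tendsto u (𝓝[D ∩ U] a) atTop)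
    {A B C : EuclideanSpace ℝ (Fin n)}
    (hAB : segment ℝ A B ⊆ D) (hBC : segment ℝ B C ⊆ D) :
    segment ℝ A C ⊆ D := by
  by_contra hcon
  rw [Set.not_subset] at hcon
  obtain ⟨ω, hωAC, hωD⟩ := hcon
  have hA : A ∈ D := hAB (left_mem_segment ℝ A B)
  have hB : B ∈ D := hAB (right_mem_segment ℝ A B)
  -- a slightly extended segment [B, C'] still lies in D
  have hsegcpt : IsCompact (segment ℝ B C) := by
    rw [segment_eq_image ℝ B C]
    exact isCompact_Icc.image (by fun_prop)
  obtain ⟨θ₀, hθ₀pos, hθ₀⟩ := hsegcpt.exists_thickening_subset_open hDo hBC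
  have hCB0 : (0:ℝ) ≤ ‖C - B‖ := norm_nonneg _
  set s : ℝ := θ₀ / (2 * (‖C - B‖ + 1)) with hs_def
  have hs_pos : 0 < s := by rw [hs_def]; positivity
  set C' : EuclideanSpace ℝ (Fin n) := C + s • (C - B) with hC'_def
  have hBC' : segment ℝ B C' ⊆ D := by
    intro z hz
    rw [segment_eq_image ℝ B C'] at hz
    obtain ⟨θ, hθ, rfl⟩ := hz
    apply hθ₀
    rw [Metric.mem_thickening_iff]
    refine ⟨(1 - θ) • B + θ • C, ?_, ?_⟩
    · rw [segment_eq_image ℝ B C]; exact ⟨θ, hθ, rfl⟩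
    · have he : ((1 - θ) • B + θ • C') - ((1 - θ) • B + θ • C) = (θ * s) • (C - B) := by
        rw [hC'_def]; module
      rw [dist_eq_norm, he, norm_smul, Real.norm_eq_abs]
      have hts : (0:ℝ) ≤ θ * s := mul_nonneg hθ.1 hs_pos.le
      rw [abs_of_nonneg hts]
      have h1 : θ * s ≤ s := by nlinarith [hθ.1, hθ.2]
      have h2 : s * ‖C - B‖ < θ₀ := by
        rw [hs_def, div_mul_eq_mul_div, div_lt_iff₀ (by positivity)]
        nlinarith
      nlinarith
  have hC'D : C' ∈ D := hBC' (right_mem_segment ℝ B C')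
  -- the parametrized triangle
  set Φ : ℝ × ℝ → EuclideanSpace ℝ (Fin n) :=
    fun p => A + p.1 • (B - A) + p.2 • (C' - A) with hΦ_def
  have hΦcont : Continuous Φ := by
    rw [hΦ_def]
    exact (continuous_const.add (continuous_fst.smul continuous_const)).add
      (continuous_snd.smul continuous_const)
  set bad : Set (ℝ × ℝ) := {p | 0 ≤ p.1 ∧ 0 ≤ p.2 ∧ p.1 + p.2 ≤ 1 ∧ Φ p ∉ D} with hbad_def
  have hbad_closed : IsClosed bad := by
    have hrw : bad = {p : ℝ × ℝ | 0 ≤ p.1} ∩ ({p | 0 ≤ p.2} ∩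
        ({p | p.1 + p.2 ≤ 1} ∩ Φ ⁻¹' Dᶜ)) := by
      ext p
      simp only [hbad_def, Set.mem_setOf_eq, Set.mem_inter_iff, Set.mem_preimage,
        Set.mem_compl_iff, and_assoc]
    rw [hrw]
    exact (isClosed_le continuous_const continuous_fst).inter
      ((isClosed_le continuous_const continuous_snd).inter
        ((isClosed_le (continuous_fst.add continuous_snd) continuous_const).inter
          (hDo.isClosed_compl.preimage hΦcont)))
  have hbad_cpt : IsCompact bad := by
    have hsub' : bad ⊆ Set.Icc ((0:ℝ), (0:ℝ)) ((1:ℝ), (1:ℝ)) := by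
      rintro p ⟨h1, h2, h3, -⟩
      refine Set.mem_Icc.mpr ⟨Prod.le_def.mpr ⟨?_, ?_⟩, Prod.le_def.mpr ⟨?_, ?_⟩⟩ <;> simp <;> linarith
    exact isCompact_Icc.of_isClosed_subset hbad_closed hsub'
  -- a bad point with positive first coordinate
  rw [segment_eq_image' ℝ A C] at hωAC
  obtain ⟨τ, hτ, hωeq⟩ := hωAC
  have hτ0 : 0 < τ := by
    rcases hτ.1.lt_or_eq with h' | h'
    · exact h'
    · exfalso; apply hωD; rw [← hωeq, ← h']; simpa using hA
  set σ2 : ℝ := τ / (1 + s) with hσ2_def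
  have h1s : (0:ℝ) < 1 + s := by linarith
  have hσ2_pos : 0 < σ2 := by rw [hσ2_def]; positivity
  have hτeq : τ = σ2 + s * σ2 := by
    rw [hσ2_def]; field_simp
  have hwit : Φ (s * σ2, σ2) = ω := by
    rw [← hωeq, hτeq]
    simp only [hΦ_def, hC'_def]
    module
  have hwitbad : (s * σ2, σ2) ∈ bad := by
    refine ⟨by positivity, by positivity, ?_, by rw [hwit]; exact hωD⟩
    have : s * σ2 + σ2 = τ := by rw [hτeq]; ring
    simp only
    linarith [hτ.2]
  have hbad_ne : bad.Nonempty := ⟨_, hwitbad⟩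
  -- maximal first coordinate
  obtain ⟨a0, ha0_bad, ha0_max⟩ := hbad_cpt.exists_isMaxOn hbad_ne continuous_fst.continuousOn
  set m : ℝ := a0.1 with hm_def
  have hmax : ∀ p ∈ bad, p.1 ≤ m := fun p hp => ha0_max hp
  have hm_pos : 0 < m := by
    have := hmax _ hwitbad
    simp only at this
    nlinarith
  set Xi : Set (ℝ × ℝ) := bad ∩ {p | m / 2 ≤ p.1} with hXi_def
  have hXi_cpt : IsCompact Xi := hbad_cpt.inter_right (isClosed_le continuous_const continuous_fst)
  have hXi_ne : Xi.Nonempty := ⟨a0, ha0_bad, by simp only [Set.mem_setOf_eq, hm_def]; linarith⟩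
  -- bad points avoid the two known edges
  have hedge : ∀ p ∈ bad, 0 < p.2 ∧ p.1 + p.2 < 1 := by
    rintro p ⟨hp1, hp2, hp3, hpD⟩
    constructor
    · rcases hp2.lt_or_eq with h' | h'
      · exact h'
      · exfalso; apply hpD
        have he : Φ p = A + p.1 • (B - A) := by
          simp only [hΦ_def]; rw [← h']; module
        rw [he]
        apply hAB
        rw [segment_eq_image' ℝ A B]
        exact ⟨p.1, ⟨hp1, by linarith⟩, rfl⟩
    · rcases hp3.lt_or_eq with h' | h'
      · exact h'
      · exfalso; apply hpD
        have hp1e : p.1 = 1 - p.2 := by linarith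
        have he : Φ p = B + p.2 • (C' - B) := by
          simp only [hΦ_def]; rw [hp1e]; module
        rw [he]
        apply hBC'
        rw [segment_eq_image' ℝ B C']
        exact ⟨p.2, ⟨hp2, by linarith⟩, rfl⟩
  -- margin d0
  have hfc : Continuous (fun p : ℝ × ℝ => min p.2 (1 - (p.1 + p.2))) := by fun_prop
  obtain ⟨z0, hz0Xi, hz0min⟩ := hXi_cpt.exists_isMinOn hXi_ne hfc.continuousOn
  set d0 : ℝ := min z0.2 (1 - (z0.1 + z0.2)) with hd0_def
  have hd0_pos : 0 < d0 := by
    obtain ⟨hz0b, -⟩ := hz0Xi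
    obtain ⟨h1, h2⟩ := hedge z0 hz0b
    exact lt_min h1 (by linarith)
  have hd0Xi : ∀ p ∈ Xi, d0 ≤ p.2 ∧ d0 ≤ 1 - (p.1 + p.2) := by
    intro p hp
    have hle : min z0.2 (1 - (z0.1 + z0.2)) ≤ min p.2 (1 - (p.1 + p.2)) := hz0min hp
    exact ⟨le_trans hle (min_le_left _ _), le_trans hle (min_le_right _ _)⟩
  -- choose a direction δ with a unique exposed minimizer on Xi
  have hδsel : ∃ δ, (0 < δ ∧ δ < min (m/4) 2⁻¹) ∧ ∃ a', a' ∈ Xi ∧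
      (∀ z ∈ Xi, δ * a'.2 - a'.1 ≤ δ * z.2 - z.1) ∧
      (∀ z ∈ Xi, δ * z.2 - z.1 = δ * a'.2 - a'.1 → z = a') := by
    by_contra hno
    push_neg at hno
    have hδmax_pos : (0:ℝ) < min (m/4) 2⁻¹ := lt_min (by linarith) (by norm_num)
    have key : ∀ δ : ℝ, ∃ q : ℚ, (0 < δ ∧ δ < min (m/4) 2⁻¹) →
        ((∃ p, p ∈ Xi ∧ (∀ z ∈ Xi, δ * p.2 - p.1 ≤ δ * z.2 - z.1) ∧ p.2 < (q:ℝ)) ∧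
         (∃ p, p ∈ Xi ∧ (∀ z ∈ Xi, δ * p.2 - p.1 ≤ δ * z.2 - z.1) ∧ (q:ℝ) < p.2)) := by
      intro δ
      by_cases hδ : 0 < δ ∧ δ < min (m/4) 2⁻¹
      · have hfc2 : Continuous (fun p : ℝ × ℝ => δ * p.2 - p.1) := by fun_prop
        obtain ⟨p, hpXi, hpmin⟩ := hXi_cpt.exists_isMinOn hXi_ne hfc2.continuousOn
        have hpmin' : ∀ z ∈ Xi, δ * p.2 - p.1 ≤ δ * z.2 - z.1 := fun z hz => hpmin hz
        obtain ⟨z, hzXi, hzeq, hzne⟩ := hno δ hδ p hpXi hpmin'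
        have hzmin' : ∀ w ∈ Xi, δ * z.2 - z.1 ≤ δ * w.2 - w.1 := by
          intro w hw; rw [hzeq]; exact hpmin' w hw
        have hne2 : p.2 ≠ z.2 := by
          intro he
          apply hzne
          have h1' : z.1 = p.1 := by rw [he] at hzeq; linarith
          exact Prod.ext h1' he.symm
        rcases lt_or_gt_of_ne hne2 with hlt | hgt
        · obtain ⟨q, hq1, hq2⟩ := exists_rat_btwn hlt
          exact ⟨q, fun _ => ⟨⟨p, hpXi, hpmin', hq1⟩, ⟨z, hzXi, hzmin', hq2⟩⟩⟩
        · obtain ⟨q, hq1, hq2⟩ := exists_rat_btwn hgt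
          exact ⟨q, fun _ => ⟨⟨z, hzXi, hzmin', hq1⟩, ⟨p, hpXi, hpmin', hq2⟩⟩⟩
      · exact ⟨0, fun hc => absurd hc hδ⟩
    choose ρ hρ using key
    have hanti : ∀ δ1 δ2 : ℝ, (0 < δ1 ∧ δ1 < min (m/4) 2⁻¹) → (0 < δ2 ∧ δ2 < min (m/4) 2⁻¹) →
        δ1 < δ2 → ρ δ2 < ρ δ1 := by
      intro δ1 δ2 h1 h2 h12
      obtain ⟨⟨p1, hp1Xi, hp1min, hp1lt⟩, -⟩ := hρ δ1 h1
      obtain ⟨-, ⟨p2, hp2Xi, hp2min, hp2gt⟩⟩ := hρ δ2 h2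
      have hm1 := hp1min p2 hp2Xi
      have hm2 := hp2min p1 hp1Xi
      have hple : p2.2 ≤ p1.2 := by nlinarith
      have : (ρ δ2 : ℝ) < (ρ δ1 : ℝ) := by linarith
      exact_mod_cast this
    have hinj : Set.InjOn (fun δ => Encodable.encode (ρ δ)) (Set.Ioo 0 (min (m/4) 2⁻¹)) := by
      intro d1 h1 d2 h2 he
      have he' : ρ d1 = ρ d2 := Encodable.encode_injective he
      by_contra hne'
      rcases Ne.lt_or_gt hne' with hlt | hlt
      · exact absurd he'.symm (ne_of_lt (hanti d1 d2 ⟨h1.1, h1.2⟩ ⟨h2.1, h2.2⟩ hlt))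
      · exact absurd he' (ne_of_lt (hanti d2 d1 ⟨h2.1, h2.2⟩ ⟨h1.1, h1.2⟩ hlt))
    have hcnt : (Set.Ioo (0:ℝ) (min (m/4) 2⁻¹)).Countable :=
      Set.countable_iff_exists_injOn.mpr ⟨_, hinj⟩
    have hcard := Cardinal.mk_Ioo_real hδmax_pos
    rw [← Cardinal.le_aleph0_iff_set_countable, hcard] at hcnt
    exact absurd hcnt (not_le.mpr Cardinal.aleph0_lt_continuum)
  obtain ⟨δ, ⟨hδ0, hδmax⟩, a', ha'Xi, hmin, huniq⟩ := hδsel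
  have hδm : δ < m/4 := lt_of_lt_of_le hδmax (min_le_left _ _)
  have hδhalf : δ < 2⁻¹ := lt_of_lt_of_le hδmax (min_le_right _ _)
  have hδ1 : δ < 1 := by
    have : (2:ℝ)⁻¹ < 1 := by norm_num
    linarith
  obtain ⟨ha'bad, ha'cut⟩ := ha'Xi
  have ha'cut' : m / 2 ≤ a'.1 := ha'cut
  obtain ⟨ha'1nn, ha'2nn, ha'sum, ha'D⟩ := ha'bad
  have ha'Xi' : a' ∈ Xi := ⟨⟨ha'1nn, ha'2nn, ha'sum, ha'D⟩, ha'cut⟩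
  have ha0Xi : a0 ∈ Xi := ⟨ha0_bad, by simp only [Set.mem_setOf_eq, hm_def]; linarith⟩
  have ha0le1 : a0.2 ≤ 1 := by
    obtain ⟨x1, x2, x3, -⟩ := ha0_bad
    linarith
  have hfa0 : δ * a'.2 - a'.1 ≤ δ * a0.2 - a0.1 := hmin a0 ha0Xi
  have hp1 : 0 ≤ δ * a'.2 := mul_nonneg hδ0.le ha'2nn
  have hp2 : δ * a0.2 ≤ δ := mul_le_of_le_one_right hδ0.le ha0le1
  have ha'_lb : 3*m/4 ≤ a'.1 := by
    have hmda : a0.1 = m := hm_def.symm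
    linarith [hfa0]
  obtain ⟨hd0a, hd0b⟩ := hd0Xi a' ha'Xi'
  set d1 : ℝ := min d0 (m/4) / 4 with hd1_def
  have hd1d0 : d1 ≤ d0/4 := by
    rw [hd1_def]
    have := min_le_left d0 (m/4)
    linarith
  have hd1m : d1 ≤ m/16 := by
    rw [hd1_def]
    have := min_le_right d0 (m/4)
    linarith
  have hd1_pos : 0 < d1 := by
    rw [hd1_def]
    have := lt_min hd0_pos (by linarith : (0:ℝ) < m/4)
    linarith
  set μ : ℝ := δ * a'.2 - a'.1 with hμ_def
  -- points near a' strictly on the good side of the exposing line are in D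
  have hclean : ∀ z : ℝ × ℝ, |z.1 - a'.1| ≤ d1 → |z.2 - a'.2| ≤ d1 →
      δ * z.2 - z.1 ≤ μ → z ≠ a' → Φ z ∈ D := by
    intro z h1 h2 hf hne
    by_contra hzD
    obtain ⟨h1a, h1b⟩ := abs_le.mp h1
    obtain ⟨h2a, h2b⟩ := abs_le.mp h2
    have hzXi : z ∈ Xi := by
      refine ⟨⟨by linarith, by linarith, by linarith, hzD⟩, ?_⟩
      simp only [Set.mem_setOf_eq]
      linarith
    exact hne (huniq z hzXi (le_antisymm hf (hmin z hzXi)))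
  set L : ℝ := ‖B - A‖ + ‖C' - A‖ + 1 with hL_def
  have hL_pos : 0 < L := by rw [hL_def]; positivity
  set aE := Φ a' with haE_def
  have hshift : ∀ p : ℝ × ℝ, Φ p - aE = (p.1 - a'.1) • (B - A) + (p.2 - a'.2) • (C' - A) := by
    intro p
    simp only [haE_def, hΦ_def]
    module
  have hnormbound : ∀ p : ℝ × ℝ, ‖Φ p - aE‖ ≤ (|p.1 - a'.1| + |p.2 - a'.2|) * L := by
    intro p
    rw [hshift p]
    have hb1 : 0 ≤ ‖B - A‖ := norm_nonneg _
    have hb2 : 0 ≤ ‖C' - A‖ := norm_nonneg _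
    have ha1 : 0 ≤ |p.1 - a'.1| := abs_nonneg _
    have ha2 : 0 ≤ |p.2 - a'.2| := abs_nonneg _
    calc ‖(p.1 - a'.1) • (B - A) + (p.2 - a'.2) • (C' - A)‖
        ≤ ‖(p.1 - a'.1) • (B - A)‖ + ‖(p.2 - a'.2) • (C' - A)‖ := norm_add_le _ _
      _ = |p.1 - a'.1| * ‖B - A‖ + |p.2 - a'.2| * ‖C' - A‖ := by
          rw [norm_smul, norm_smul, Real.norm_eq_abs, Real.norm_eq_abs]
      _ ≤ (|p.1 - a'.1| + |p.2 - a'.2|) * L := by rw [hL_def]; nlinarith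
  have haE_cl : aE ∈ closure D := by
    rw [Metric.mem_closure_iff]
    intro ε' hε'
    set η' : ℝ := min (d1/2) (ε'/(4*L)) with hη'_def
    have hη'_pos : 0 < η' := lt_min (by linarith) (by positivity)
    have hη'd1 : η' ≤ d1/2 := min_le_left _ _
    have hη'ε : η' ≤ ε'/(4*L) := min_le_right _ _
    refine ⟨Φ (a'.1 + η', a'.2 + η' * δ), ?_, ?_⟩
    · apply hclean
      · simp only
        rw [show a'.1 + η' - a'.1 = η' by ring, abs_of_nonneg hη'_pos.le]
        linarith
      · simp only
        rw [show a'.2 + η' * δ - a'.2 = η' * δ by ring,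
          abs_of_nonneg (mul_nonneg hη'_pos.le hδ0.le)]
        have := mul_le_of_le_one_right hη'_pos.le hδ1.le
        linarith
      · simp only
        have h5 : a'.1 + η' = a'.1 + 0 * δ + η' := by ring
        have h6 : a'.2 + η' * δ = a'.2 + 0 + η' * δ := by ring
        rw [h5, h6]
        exact key_f_ineq hδ0.le hδ1.le hη'_pos.le hμ_def
      · intro heq
        have := congrArg Prod.fst heq
        simp only at this
        linarith
    · rw [dist_comm, dist_eq_norm]
      refine lt_of_le_of_lt (hnormbound _) ?_
      simp only
      rw [show a'.1 + η' - a'.1 = η' by ring, show a'.2 + η' * δ - a'.2 = η' * δ by ring,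
        abs_of_nonneg hη'_pos.le, abs_of_nonneg (mul_nonneg hη'_pos.le hδ0.le)]
      have h1 : η' * δ ≤ η' := mul_le_of_le_one_right hη'_pos.le hδ1.le
      have h2 : (η' + η' * δ) * L ≤ (2 * η') * L :=
        mul_le_mul_of_nonneg_right (by linarith) hL_pos.le
      have h3 : η' * (4 * L) ≤ ε' := (le_div_iff₀ (by positivity)).mp hη'ε
      nlinarith [hη'_pos, hL_pos]
  have haE_fr : aE ∈ frontier D := by
    rw [hDo.frontier_eq]
    exact ⟨haE_cl, ha'D⟩
  obtain ⟨U, hUo, haEU, u, hu_cvx, hu_top⟩ := h aE haE_fr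
  obtain ⟨ε, hε_pos, hεball⟩ := Metric.isOpen_iff.mp hUo aE haEU
  set r : ℝ := min (d1/2) (ε/(4*L)) / 2 with hr_def
  have hr_pos : 0 < r := by
    have h2' : (0:ℝ) < ε/(4*L) := by positivity
    rw [hr_def]
    have := lt_min (by linarith : (0:ℝ) < d1/2) h2'
    linarith
  have hrd1 : 2*r ≤ d1 := by
    rw [hr_def]
    have := min_le_left (d1/2) (ε/(4*L))
    linarith
  have hr2 : 2*r ≤ ε/(4*L) := by
    rw [hr_def]
    have := min_le_right (d1/2) (ε/(4*L))
    linarith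
  have hrε : 4*(r*L) < ε := by
    have h3 : (2*r) * (4*L) ≤ ε := (le_div_iff₀ (by positivity)).mp hr2
    nlinarith [hr_pos, hL_pos]
  have hDU : ∀ z : ℝ × ℝ, |z.1 - a'.1| ≤ 2*r → |z.2 - a'.2| ≤ 2*r →
      δ * z.2 - z.1 ≤ μ → z ≠ a' → Φ z ∈ D ∩ U := by
    intro z h1 h2 hf hne
    refine ⟨hclean z (h1.trans hrd1) (h2.trans hrd1) hf hne, hεball ?_⟩
    rw [Metric.mem_ball, dist_eq_norm]
    have hnb := hnormbound z
    have h5 : (|z.1 - a'.1| + |z.2 - a'.2|) * L ≤ (4*r)*L :=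
      mul_le_mul_of_nonneg_right (by linarith) hL_pos.le
    have h6 : (4*r)*L = 4*(r*L) := by ring
    linarith
  -- geometric configuration: a family of short segments converging to a'
  set G : ℝ → ℝ → ℝ × ℝ := fun c η => (a'.1 + c*δ + η, a'.2 + c + η*δ) with hG_def
  have habs1 : ∀ c η : ℝ, |c| ≤ r → 0 ≤ η → η ≤ r → |a'.1 + c*δ + η - a'.1| ≤ 2*r := by
    intro c η hc h0 hr'
    rw [show a'.1 + c*δ + η - a'.1 = c*δ + η by ring]
    have h1 : |c*δ| ≤ r := by
      rw [abs_mul, abs_of_nonneg hδ0.le]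
      calc |c| * δ ≤ r * δ := mul_le_mul_of_nonneg_right hc hδ0.le
        _ ≤ r * 1 := mul_le_mul_of_nonneg_left hδ1.le hr_pos.le
        _ = r := mul_one r
    calc |c*δ + η| ≤ |c*δ| + |η| := abs_add_le _ _
      _ ≤ r + r := by rw [abs_of_nonneg h0]; exact add_le_add h1 hr'
      _ = 2*r := by ring
  have habs2 : ∀ c η : ℝ, |c| ≤ r → 0 ≤ η → η ≤ r → |a'.2 + c + η*δ - a'.2| ≤ 2*r := by
    intro c η hc h0 hr'
    rw [show a'.2 + c + η*δ - a'.2 = c + η*δ by ring]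
    have h1 : |η*δ| ≤ r := by
      rw [abs_mul, abs_of_nonneg h0, abs_of_nonneg hδ0.le]
      calc η * δ ≤ r * δ := mul_le_mul_of_nonneg_right hr' hδ0.le
        _ ≤ r * 1 := mul_le_mul_of_nonneg_left hδ1.le hr_pos.le
        _ = r := mul_one r
    calc |c + η*δ| ≤ |c| + |η*δ| := abs_add_le _ _
      _ ≤ r + r := add_le_add hc h1
      _ = 2*r := by ring
  have hGmem : ∀ c η : ℝ, |c| ≤ r → 0 ≤ η → η ≤ r → (0 < η ∨ (η = 0 ∧ c ≠ 0)) →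
      Φ (G c η) ∈ D ∩ U := by
    intro c η hc h0 hr' halt
    have hf : δ * (G c η).2 - (G c η).1 ≤ μ := by
      simp only [hG_def]
      exact key_f_ineq hδ0.le hδ1.le h0 hμ_def
    have h1 : |(G c η).1 - a'.1| ≤ 2*r := by
      simp only [hG_def]; exact habs1 c η hc h0 hr'
    have h2 : |(G c η).2 - a'.2| ≤ 2*r := by
      simp only [hG_def]; exact habs2 c η hc h0 hr'
    have hne : G c η ≠ a' := by
      rcases halt with hη | ⟨hη0, hc0⟩
      · intro heq
        have hfv := key_f_ineq_strict (c := c) (x := a'.1) (y := a'.2) hδ0.le hδ1 hη hμ_def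
        have e1 : a'.1 + c*δ + η = a'.1 := by
          have := congrArg Prod.fst heq
          simpa [hG_def] using this
        have e2 : a'.2 + c + η*δ = a'.2 := by
          have := congrArg Prod.snd heq
          simpa [hG_def] using this
        rw [e1, e2, hμ_def] at hfv
        linarith
      · intro heq
        have e2 : a'.2 + c + η*δ = a'.2 := by
          have := congrArg Prod.snd heq
          simpa [hG_def] using this
        rw [hη0] at e2
        apply hc0
        linarith
    exact hDU (G c η) h1 h2 hf hne
  have habsr : |r| ≤ r := le_of_eq (abs_of_nonneg hr_pos.le)
  have habsnr : |(-r : ℝ)| ≤ r := by rw [abs_neg]; exact habsr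
  have hPmem : ∀ η : ℝ, 0 ≤ η → η ≤ r → Φ (G r η) ∈ D ∩ U := by
    intro η h0 hr'
    rcases h0.lt_or_eq with hη | hη
    · exact hGmem r η habsr h0 hr' (Or.inl hη)
    · exact hGmem r η habsr h0 hr' (Or.inr ⟨hη.symm, hr_pos.ne'⟩)
  have hQmem : ∀ η : ℝ, 0 ≤ η → η ≤ r → Φ (G (-r) η) ∈ D ∩ U := by
    intro η h0 hr'
    rcases h0.lt_or_eq with hη | hη
    · exact hGmem (-r) η habsnr h0 hr' (Or.inl hη)
    · exact hGmem (-r) η habsnr h0 hr' (Or.inr ⟨hη.symm, neg_ne_zero.mpr hr_pos.ne'⟩)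
  have hMmem : ∀ η : ℝ, 0 < η → η ≤ r → Φ (G 0 η) ∈ D ∩ U := by
    intro η h0 hr'
    exact hGmem 0 η (by simpa using hr_pos.le) h0.le hr' (Or.inl h0)
  have hseg : ∀ η : ℝ, 0 < η → η ≤ r →
      segment ℝ (Φ (G r η)) (Φ (G (-r) η)) ⊆ D ∩ U := by
    intro η h0 hr' x hx
    rw [segment_eq_image ℝ] at hx
    obtain ⟨θ, hθ, rfl⟩ := hx
    have hxeq : (1 - θ) • Φ (G r η) + θ • Φ (G (-r) η) = Φ (G ((1-2*θ)*r) η) := by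
      simp only [hG_def, hΦ_def]
      module
    show (1 - θ) • Φ (G r η) + θ • Φ (G (-r) η) ∈ D ∩ U
    rw [hxeq]
    refine hGmem _ _ ?_ h0.le hr' (Or.inl h0)
    rw [abs_mul, abs_of_nonneg hr_pos.le]
    have hθ1 : |1 - 2*θ| ≤ 1 := abs_le.mpr ⟨by linarith [hθ.1, hθ.2], by linarith [hθ.1, hθ.2]⟩
    have h2 := mul_le_mul_of_nonneg_right hθ1 hr_pos.le
    linarith
  have hmid : ∀ η : ℝ, (2⁻¹:ℝ) • Φ (G r η) + (1 - 2⁻¹:ℝ) • Φ (G (-r) η) = Φ (G 0 η) := by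
    intro η
    simp only [hG_def, hΦ_def]
    module
  have hbound : ∀ η : ℝ, 0 < η → η ≤ r →
      u (Φ (G 0 η)) ≤ 2⁻¹ * u (Φ (G r η)) + (1 - 2⁻¹) * u (Φ (G (-r) η)) := by
    intro η h0 hr'
    have hcv := hu_cvx (Φ (G r η)) (hPmem η h0.le hr') (Φ (G (-r) η)) (hQmem η h0.le hr')
      (hseg η h0 hr') 2⁻¹ ⟨by norm_num, by norm_num⟩
    rw [hmid η] at hcv
    exact hcv
  -- local boundedness of u near points of D ∩ U
  have hDUopen : IsOpen (D ∩ U) := hDo.inter hUo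
  have hloc : ∀ X0, X0 ∈ D ∩ U → ∃ ρ, 0 < ρ ∧ Metric.ball X0 ρ ⊆ D ∩ U ∧
      ContinuousWithinAt u (Metric.ball X0 ρ) X0 := by
    intro X0 hX0
    obtain ⟨ρ, hρ0, hρsub⟩ := Metric.isOpen_iff.mp hDUopen X0 hX0
    have hcvx : ConvexOn ℝ (Metric.ball X0 ρ) u := by
      refine ⟨convex_ball _ _, ?_⟩
      intro x hx y hy α β hα hβ hαβ
      have hseg' : segment ℝ x y ⊆ D ∩ U :=
        ((convex_ball X0 ρ).segment_subset hx hy).trans hρsub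
      have h' := hu_cvx x (hρsub hx) y (hρsub hy) hseg' α ⟨hα, by linarith⟩
      rw [show (1 - α : ℝ) = β by linarith] at h'
      simpa [smul_eq_mul] using h'
    have hcont : ContinuousOn u (Metric.ball X0 ρ) := hcvx.continuousOn Metric.isOpen_ball
    exact ⟨ρ, hρ0, hρsub, hcont X0 (Metric.mem_ball_self hρ0)⟩
  -- sequences along which everything converges
  set ηs : ℕ → ℝ := fun k => r / (k + 1) with hηs_def
  have hηs_pos : ∀ k, 0 < ηs k := by
    intro k
    rw [hηs_def]
    positivity
  have hηs_le : ∀ k, ηs k ≤ r := by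
    intro k
    rw [hηs_def]
    rw [div_le_iff₀ (by positivity)]
    have hk : (1:ℝ) ≤ (k:ℝ) + 1 := by
      have : (0:ℝ) ≤ (k:ℝ) := Nat.cast_nonneg k
      linarith
    nlinarith [hr_pos]
  have hηs_tend : Tendsto ηs atTop (𝓝 0) := by
    have h1 := tendsto_one_div_add_atTop_nhds_zero_nat.const_mul r
    rw [mul_zero] at h1
    refine h1.congr fun k => ?_
    rw [hηs_def, mul_one_div]
  have hGshift : ∀ c η : ℝ, Φ (G c η) = Φ (G c 0) + η • ((B - A) + δ • (C' - A)) := by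
    intro c η
    simp only [hG_def, hΦ_def]
    module
  have hG00 : Φ (G 0 0) = aE := by
    simp only [hG_def, hΦ_def, haE_def]
    module
  have htend : ∀ c : ℝ, Tendsto (fun k => Φ (G c (ηs k))) atTop (𝓝 (Φ (G c 0))) := by
    intro c
    have h1 : Tendsto (fun k => (ηs k) • ((B - A) + δ • (C' - A))) atTop
        (𝓝 ((0:ℝ) • ((B - A) + δ • (C' - A)))) := hηs_tend.smul_const _
    rw [zero_smul] at h1
    have h2 := (tendsto_const_nhds (x := Φ (G c 0)) (f := (atTop : Filter ℕ))).add h1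
    rw [add_zero] at h2
    exact h2.congr fun k => (hGshift c (ηs k)).symm
  obtain ⟨ρP, hρP0, hρPsub, hcontP⟩ := hloc (Φ (G r 0)) (hPmem 0 le_rfl hr_pos.le)
  obtain ⟨ρQ, hρQ0, hρQsub, hcontQ⟩ := hloc (Φ (G (-r) 0)) (hQmem 0 le_rfl hr_pos.le)
  have hevP : ∀ᶠ k in atTop, u (Φ (G r (ηs k))) ≤ u (Φ (G r 0)) + 1 := by
    have hmem : ∀ᶠ k in atTop, Φ (G r (ηs k)) ∈ Metric.ball (Φ (G r 0)) ρP :=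
      (Metric.tendsto_nhds.mp (htend r) ρP hρP0).mono fun k hk => Metric.mem_ball.mpr hk
    have htin : Tendsto (fun k => Φ (G r (ηs k))) atTop
        (𝓝[Metric.ball (Φ (G r 0)) ρP] (Φ (G r 0))) :=
      tendsto_nhdsWithin_iff.mpr ⟨htend r, hmem⟩
    have hcomp : Tendsto (fun k => u (Φ (G r (ηs k)))) atTop (𝓝 (u (Φ (G r 0)))) :=
      Filter.Tendsto.comp hcontP htin
    exact hcomp.eventually (eventually_le_nhds (lt_add_one _))
  have hevQ : ∀ᶠ k in atTop, u (Φ (G (-r) (ηs k))) ≤ u (Φ (G (-r) 0)) + 1 := by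
    have hmem : ∀ᶠ k in atTop, Φ (G (-r) (ηs k)) ∈ Metric.ball (Φ (G (-r) 0)) ρQ :=
      (Metric.tendsto_nhds.mp (htend (-r)) ρQ hρQ0).mono fun k hk => Metric.mem_ball.mpr hk
    have htin : Tendsto (fun k => Φ (G (-r) (ηs k))) atTop
        (𝓝[Metric.ball (Φ (G (-r) 0)) ρQ] (Φ (G (-r) 0))) :=
      tendsto_nhdsWithin_iff.mpr ⟨htend (-r), hmem⟩
    have hcomp : Tendsto (fun k => u (Φ (G (-r) (ηs k)))) atTop (𝓝 (u (Φ (G (-r) 0)))) :=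
      Filter.Tendsto.comp hcontQ htin
    exact hcomp.eventually (eventually_le_nhds (lt_add_one _))
  have hMin : Tendsto (fun k => Φ (G 0 (ηs k))) atTop (𝓝[D ∩ U] aE) := by
    refine tendsto_nhdsWithin_iff.mpr ⟨?_,
      Eventually.of_forall fun k => hMmem (ηs k) (hηs_pos k) (hηs_le k)⟩
    have h1 := htend 0
    rw [hG00] at h1
    exact h1
  have hblow : Tendsto (fun k => u (Φ (G 0 (ηs k)))) atTop atTop := hu_top.comp hMin
  set Cb : ℝ := 2⁻¹ * (u (Φ (G r 0)) + 1) + (1 - 2⁻¹) * (u (Φ (G (-r) 0)) + 1) with hCb_def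
  have hev3 : ∀ᶠ k in atTop, Cb < u (Φ (G 0 (ηs k))) := hblow.eventually (eventually_gt_atTop Cb)
  obtain ⟨k, h1, h2, h3⟩ := (hevP.and (hevQ.and hev3)).exists
  have h4 := hbound (ηs k) (hηs_pos k) (hηs_le k)
  rw [hCb_def] at h3
  linarith




/-- Let `D ⊆ ℝⁿ` be a domain such that every boundary point `a` has a neighborhood `U_a` and a
function `u_a : D ∩ U_a → ℝ`, convex along every segment contained in `D ∩ U_a`, with
`lim_{z → a} u_a(z) = ∞`. Then `D` is convex. -/
theorem convex_of_local_convex_exhaustion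
    {n : ℕ} (D : Set (EuclideanSpace ℝ (Fin n)))
    (hD : IsOpen D ∧ IsConnected D)
    (h : ∀ a ∈ frontier D, ∃ U : Set (EuclideanSpace ℝ (Fin n)), IsOpen U ∧ a ∈ U ∧
      ∃ u : EuclideanSpace ℝ (Fin n) → ℝ,
        (∀ x ∈ D ∩ U, ∀ y ∈ D ∩ U, segment ℝ x y ⊆ D ∩ U →
          ∀ t : ℝ, t ∈ Set.Icc (0 : ℝ) 1 →
            u (t • x + (1 - t) • y) ≤ t * u x + (1 - t) * u y) ∧
        Filter.Tendsto u (𝓝[D ∩ U] a) atTop) :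
    Convex ℝ D := by
  obtain ⟨hDo, hDconn⟩ := hD
  rw [convex_iff_segment_subset]
  intro x hx y hy
  set S : Set (EuclideanSpace ℝ (Fin n)) := {z | z ∈ D ∧ segment ℝ x z ⊆ D} with hS_def
  have hSopen : IsOpen S := by
    rw [Metric.isOpen_iff]
    rintro z ⟨hzD, hzseg⟩
    obtain ⟨ρ, hρ0, hρsub⟩ := Metric.isOpen_iff.mp hDo z hzD
    refine ⟨ρ, hρ0, fun z' hz' => ⟨hρsub hz', tri_step hDo h hzseg
      (((convex_ball z ρ).segment_subset (Metric.mem_ball_self hρ0) hz').trans hρsub)⟩⟩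
  have hVopen : IsOpen {z | z ∈ D ∧ z ∉ S} := by
    rw [Metric.isOpen_iff]
    rintro z ⟨hzD, hzS⟩
    obtain ⟨ρ, hρ0, hρsub⟩ := Metric.isOpen_iff.mp hDo z hzD
    refine ⟨ρ, hρ0, fun z' hz' => ⟨hρsub hz', fun hz'S => ?_⟩⟩
    exact hzS ⟨hzD, tri_step hDo h hz'S.2
      (((convex_ball z ρ).segment_subset hz' (Metric.mem_ball_self hρ0)).trans hρsub)⟩
  have hdisj : Disjoint S {z | z ∈ D ∧ z ∉ S} := by
    rw [Set.disjoint_left]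
    rintro a haS ⟨-, h2⟩
    exact h2 haS
  have hsub : D ⊆ S ∪ {z | z ∈ D ∧ z ∉ S} := by
    intro a ha
    by_cases h' : a ∈ S
    · exact Or.inl h'
    · exact Or.inr ⟨ha, h'⟩
  have hne : (D ∩ S).Nonempty :=
    ⟨x, hx, hx, by rw [segment_same]; exact Set.singleton_subset_iff.mpr hx⟩
  have hDS : D ⊆ S :=
    hDconn.isPreconnected.subset_left_of_subset_union hSopen hVopen hdisj hsub hne
  exact (hDS hy).2
end

section
/- If D ⊂ ℝⁿ is a domain which is not convex, then there exist points a, b ∈ D such that the midpoint c = (a+b)/2 lies on ∂D while [a,b] \ {c} ⊂ D. -/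
open Set

set_option maxHeartbeats 1000000


private lemma core2d (U : Set (ℝ × ℝ)) (hU : IsOpen U)
    (k : ℝ) (hk0 : 0 < k) (hk1 : k < 1) (hkU : ((k, (0:ℝ)) : ℝ × ℝ) ∉ U)
    (δ₁ δ₂ : ℝ) (hδ₁ : 0 < δ₁) (hδ₂ : 0 < δ₂)
    (hb₁ : Metric.ball (((0:ℝ), (0:ℝ)) : ℝ × ℝ) δ₁ ⊆ U)
    (hb₂ : Metric.ball (((1:ℝ), (0:ℝ)) : ℝ × ℝ) δ₂ ⊆ U)
    (hstrip : ∀ x y : ℝ, 0 ≤ x → x ≤ 1 → 0 < y → x + y ≤ 1 → ((x, y) : ℝ × ℝ) ∈ U) :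
    ∃ a b c : ℝ × ℝ, a ∈ U ∧ b ∈ U ∧ c ∉ U ∧ a + b = (2:ℝ) • c ∧
      ∀ θ : ℝ, θ ∈ Icc (0:ℝ) 1 → a + θ • (b - a) = c ∨ a + θ • (b - a) ∈ U := by
  set x₁ : ℝ := min (δ₁/2) (k/2) with hx₁def
  set x₂ : ℝ := 1 - min (δ₂/2) ((1-k)/2) with hx₂def
  have hx₁pos : 0 < x₁ := lt_min (by linarith) (by linarith)
  have hx₁k : x₁ < k := (min_le_right _ _).trans_lt (by linarith)
  have hkx₂ : k < x₂ := by
    have : min (δ₂/2) ((1-k)/2) ≤ (1-k)/2 := min_le_right _ _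
    simp only [hx₂def]; linarith
  have hx₂1 : x₂ < 1 := by
    have : 0 < min (δ₂/2) ((1-k)/2) := lt_min (by linarith) (by linarith)
    simp only [hx₂def]; linarith
  set ε₀ : ℝ := min δ₁ δ₂ / 2 with hε₀def
  have hε₀pos : 0 < ε₀ := by
    have := lt_min hδ₁ hδ₂; simp only [hε₀def]; linarith
  have hcol1 : ∀ y : ℝ, |y| < ε₀ → ((x₁, y) : ℝ × ℝ) ∈ U := by
    intro y hy
    apply hb₁
    rw [Metric.mem_ball, Prod.dist_eq]
    have h1 : dist x₁ (0:ℝ) < δ₁ := by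
      rw [Real.dist_eq]
      have : |x₁ - 0| = x₁ := by rw [sub_zero, abs_of_pos hx₁pos]
      rw [this]
      exact (min_le_left _ _).trans_lt (by linarith)
    have h2 : dist y (0:ℝ) < δ₁ := by
      rw [Real.dist_eq, sub_zero]
      exact hy.trans_le (by simp only [hε₀def]; have := min_le_left δ₁ δ₂; linarith)
    exact max_lt h1 h2
  have hcol2 : ∀ y : ℝ, |y| < ε₀ → ((x₂, y) : ℝ × ℝ) ∈ U := by
    intro y hy
    apply hb₂
    rw [Metric.mem_ball, Prod.dist_eq]
    have h1 : dist x₂ (1:ℝ) < δ₂ := by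
      rw [Real.dist_eq]
      have he : x₂ - 1 = -(min (δ₂/2) ((1-k)/2)) := by simp only [hx₂def]; ring
      rw [he, abs_neg, abs_of_pos (lt_min (by linarith) (by linarith))]
      exact (min_le_left _ _).trans_lt (by linarith)
    have h2 : dist y (0:ℝ) < δ₂ := by
      rw [Real.dist_eq, sub_zero]
      exact hy.trans_le (by simp only [hε₀def]; have := min_le_right δ₁ δ₂; linarith)
    exact max_lt h1 h2
  set m₀ : ℝ := min ε₀ 1 with hm₀def
  have hm₀pos : 0 < m₀ := lt_min hε₀pos one_pos
  set BOX : Set (ℝ × ℝ) := Icc x₁ x₂ ×ˢ Icc (-1 : ℝ) 0 with hBOXdef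
  set C : Set (ℝ × ℝ) := BOX \ U with hCdef
  have hCclosed : IsClosed C := (isClosed_Icc.prod isClosed_Icc).sdiff hU
  have hCcompact : IsCompact C :=
    IsCompact.of_isClosed_subset (isCompact_Icc.prod isCompact_Icc) hCclosed diff_subset
  have hkC : ((k, (0:ℝ)) : ℝ × ℝ) ∈ C := by
    constructor
    · exact ⟨⟨le_of_lt hx₁k, le_of_lt hkx₂⟩, ⟨by norm_num, le_refl 0⟩⟩
    · exact hkU
  clear_value x₁ x₂ ε₀ m₀
  set f : ℝ → ℝ × ℝ → ℝ := fun m v => v.2 - m * v.1 with hfdef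
  have hfc : ∀ m : ℝ, ContinuousOn (f m) C :=
    fun m => (continuous_snd.sub (continuous_const.mul continuous_fst)).continuousOn
  by_cases Hu : ∃ m ∈ Ioo (0:ℝ) m₀, ∃ c, c ∈ C ∧ IsMaxOn (f m) C c ∧
      ∀ v ∈ C, f m v = f m c → v = c
  · -- unique maximizer: construct the chord
    obtain ⟨m, hm, c, hcC, hmax, huniq⟩ := Hu
    obtain ⟨hm0, hmm₀⟩ := hm
    have hcU : c ∉ U := hcC.2
    obtain ⟨⟨hcx1, hcx2⟩, hcy1, hcy2⟩ := hcC.1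
    have hbase : -(m*k) ≤ c.2 - m * c.1 := by
      have h := hmax hkC
      simp only [hfdef, mem_setOf_eq] at h
      linarith
    have hmk : m * k < ε₀ := by
      have h1 : m * k < m * 1 := by nlinarith
      have h2 : m < ε₀ := hmm₀.trans_le (hm₀def.le.trans (min_le_left _ _))
      nlinarith
    have hmk1 : m * k < 1 := by
      have h2 : m < 1 := hmm₀.trans_le (hm₀def.le.trans (min_le_right _ _))
      nlinarith
    have hx1c : x₁ < c.1 := by
      rcases lt_or_eq_of_le hcx1 with h | h
      · exact h
      · exfalso
        have hc2 : c.2 ≤ -ε₀ := by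
          by_contra hcon
          push_neg at hcon
          have habs : |c.2| < ε₀ := abs_lt.mpr ⟨by linarith, by linarith⟩
          have hmem : ((x₁, c.2) : ℝ × ℝ) ∈ U := hcol1 c.2 habs
          rw [h] at hmem
          exact hcU (by rwa [Prod.mk.eta] at hmem)
        rw [← h] at hbase
        nlinarith
    have hx2c : c.1 < x₂ := by
      rcases lt_or_eq_of_le hcx2 with h | h
      · exact h
      · exfalso
        have hc2 : c.2 ≤ -ε₀ := by
          by_contra hcon
          push_neg at hcon
          have habs : |c.2| < ε₀ := abs_lt.mpr ⟨by linarith, by linarith⟩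
          have hmem : ((x₂, c.2) : ℝ × ℝ) ∈ U := hcol2 c.2 habs
          rw [← h] at hmem
          exact hcU (by rwa [Prod.mk.eta] at hmem)
        rw [h] at hbase
        nlinarith
    have hyc : -1 < c.2 := by
      rcases lt_or_eq_of_le hcy1 with h | h
      · exact h
      · exfalso
        rw [← h] at hbase
        nlinarith
    set R : ℝ := 1 - x₂ with hRdef
    have hRpos : 0 < R := by simp only [hRdef]; linarith
    set ε : ℝ := min (min (c.1 - x₁) (x₂ - c.1)) (min ((c.2+1)/(m+1)) (R/(m+1))) / 2 with hεdef
    have hεpos : 0 < ε := by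
      have h1 : 0 < min (c.1 - x₁) (x₂ - c.1) := lt_min (by linarith) (by linarith)
      have h2 : 0 < min ((c.2+1)/(m+1)) (R/(m+1)) :=
        lt_min (div_pos (by linarith) (by linarith)) (div_pos hRpos (by linarith))
      have := lt_min h1 h2
      simp only [hεdef]; linarith
    have hεx1 : ε ≤ (c.1 - x₁)/2 := by
      have h := (min_le_left (min (c.1 - x₁) (x₂ - c.1)) (min ((c.2+1)/(m+1)) (R/(m+1)))).trans
        (min_le_left (c.1 - x₁) (x₂ - c.1))
      simp only [hεdef]; linarith
    have hεx2 : ε ≤ (x₂ - c.1)/2 := by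
      have h := (min_le_left (min (c.1 - x₁) (x₂ - c.1)) (min ((c.2+1)/(m+1)) (R/(m+1)))).trans
        (min_le_right (c.1 - x₁) (x₂ - c.1))
      simp only [hεdef]; linarith
    have hεy : ε ≤ (c.2+1)/(m+1)/2 := by
      have h := (min_le_right (min (c.1 - x₁) (x₂ - c.1)) (min ((c.2+1)/(m+1)) (R/(m+1)))).trans
        (min_le_left ((c.2+1)/(m+1)) (R/(m+1)))
      simp only [hεdef]; linarith
    have hεR : ε ≤ R/(m+1)/2 := by
      have h := (min_le_right (min (c.1 - x₁) (x₂ - c.1)) (min ((c.2+1)/(m+1)) (R/(m+1)))).trans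
        (min_le_right ((c.2+1)/(m+1)) (R/(m+1)))
      simp only [hεdef]; linarith
    have hm1 : (0:ℝ) < m + 1 := by linarith
    have hεy' : ε * ((m+1)*2) ≤ c.2 + 1 := by
      rw [div_div, le_div_iff₀ (by positivity)] at hεy
      linarith
    have hεR' : ε * ((m+1)*2) ≤ R := by
      rw [div_div, le_div_iff₀ (by positivity)] at hεR
      linarith
    have hmεy : m * ε < c.2 + 1 := by nlinarith
    have hmεR : m * ε ≤ R/2 := by nlinarith
    have hεR2 : ε ≤ R/2 := by nlinarith
    clear_value R ε
    have PU : ∀ t : ℝ, |t| ≤ ε → t ≠ 0 → ((c.1 + t, c.2 + m * t) : ℝ × ℝ) ∈ U := by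
      intro t ht htne
      have habs1 : -ε ≤ t := by rw [abs_le] at ht; exact ht.1
      have habs2 : t ≤ ε := by rw [abs_le] at ht; exact ht.2
      have hmt1 : -(m*ε) ≤ m*t := by nlinarith
      have hmt2 : m*t ≤ m*ε := by nlinarith
      by_cases hsign : c.2 + m * t ≤ 0
      · -- box case
        by_contra hnU
        have hvC : ((c.1 + t, c.2 + m * t) : ℝ × ℝ) ∈ C := by
          refine ⟨?_, hnU⟩
          simp only [hBOXdef, Set.mem_prod, Set.mem_Icc]
          refine ⟨⟨?_, ?_⟩, ?_, hsign⟩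
          · linarith [habs1, hεx1, hx1c]
          · linarith [habs2, hεx2, hx2c]
          · linarith [hmt1, hmεy, hyc]
        have heq : f m (c.1 + t, c.2 + m * t) = f m c := by
          simp only [hfdef]; ring
        have := huniq _ hvC heq
        rw [Prod.ext_iff] at this
        simp only at this
        exact htne (by linarith [this.1])
      · push_neg at hsign
        have : ((c.1 + t, c.2 + m * t) : ℝ × ℝ) ∈ U := by
          apply hstrip
          · linarith
          · linarith
          · exact hsign
          · -- (c.1 + t) + (c.2 + m*t) ≤ 1
            have : c.2 + m*t ≤ m*ε := by nlinarith
            simp only [hRdef] at hmεR hεR2 ⊢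
            linarith
        exact this
    refine ⟨(c.1 - ε, c.2 - m*ε), (c.1 + ε, c.2 + m*ε), c, ?_, ?_, hcU, ?_, ?_⟩
    · have := PU (-ε) (by rw [abs_neg, abs_of_pos hεpos]) (by linarith)
      simpa [sub_eq_add_neg] using this
    · exact PU ε (by rw [abs_of_pos hεpos]) (by linarith)
    · rw [Prod.ext_iff]
      constructor <;> simp <;> ring
    · intro θ hθ
      set t : ℝ := (2*θ - 1)*ε with htdef
      have hu : ((c.1 - ε, c.2 - m*ε) : ℝ × ℝ) + θ • ((c.1 + ε, c.2 + m*ε) - (c.1 - ε, c.2 - m*ε))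
          = ((c.1 + t, c.2 + m*t) : ℝ × ℝ) := by
        rw [Prod.ext_iff]
        constructor <;> simp [htdef] <;> ring
      rw [hu]
      by_cases ht0 : t = 0
      · left; rw [ht0]; simp
      · right
        apply PU t _ ht0
        rw [htdef, abs_mul, abs_of_pos hεpos]
        have : |2*θ - 1| ≤ 1 := by
          rw [abs_le]; obtain ⟨h1, h2⟩ := hθ; constructor <;> linarith
        nlinarith
  · -- no unique maximizer for any m : contradiction via countability
    exfalso
    push_neg at Hu
    have hpairs : ∀ m : ℝ, ∃ st : (ℝ × ℝ) × (ℝ × ℝ), m ∈ Ioo (0:ℝ) m₀ →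
        st.1 ∈ C ∧ st.2 ∈ C ∧ IsMaxOn (f m) C st.1 ∧ IsMaxOn (f m) C st.2 ∧ st.1.1 < st.2.1 := by
      intro m
      by_cases hm : m ∈ Ioo (0:ℝ) m₀
      · obtain ⟨c, hcC, hcmax⟩ := hCcompact.exists_isMaxOn ⟨(k,0), hkC⟩ (hfc m)
        obtain ⟨v, hvC, hveq, hvne⟩ := Hu m hm c hcC hcmax
        have hvmax : IsMaxOn (f m) C v := by
          intro u hu
          have h1 := hcmax hu
          simp only [mem_setOf_eq] at h1 ⊢
          rw [hveq]
          exact h1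
        have h1ne : v.1 ≠ c.1 := by
          intro h
          apply hvne
          have : v.2 = c.2 := by
            have := hveq
            simp only [hfdef] at this
            rw [h] at this
            linarith
          exact Prod.ext h this
        rcases lt_or_gt_of_ne h1ne with h | h
        · exact ⟨(v, c), fun _ => ⟨hvC, hcC, hvmax, hcmax, h⟩⟩
        · exact ⟨(c, v), fun _ => ⟨hcC, hvC, hcmax, hvmax, h⟩⟩
      · exact ⟨((0,0),(0,0)), fun h => absurd h hm⟩
    choose ST hST using hpairs
    have hrat : ∀ m : ℝ, ∃ q : ℚ, m ∈ Ioo (0:ℝ) m₀ →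
        (ST m).1.1 < (q:ℝ) ∧ (q:ℝ) < (ST m).2.1 := by
      intro m
      by_cases hm : m ∈ Ioo (0:ℝ) m₀
      · obtain ⟨q, hq1, hq2⟩ := exists_rat_btwn (hST m hm).2.2.2.2
        exact ⟨q, fun _ => ⟨hq1, hq2⟩⟩
      · exact ⟨(0:ℚ), fun h => absurd h hm⟩
    choose Q hQ using hrat
    have hex : ∀ m m' : ℝ, m ∈ Ioo (0:ℝ) m₀ → m' ∈ Ioo (0:ℝ) m₀ → m < m' →
        (ST m').2.1 ≤ (ST m).1.1 := by
      intro m m' hm hm' hlt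
      obtain ⟨hSC, _, hSmax, _, _⟩ := hST m hm
      obtain ⟨_, hTC', _, hTmax', _⟩ := hST m' hm'
      have h1 := hSmax hTC'
      have h2 := hTmax' hSC
      simp only [hfdef, mem_setOf_eq] at h1 h2
      nlinarith
    have hinj : InjOn Q (Ioo (0:ℝ) m₀) := by
      intro a ha b hb hab
      by_contra hne
      rcases lt_or_gt_of_ne hne with h | h
      · have e1 := (hQ b hb).2
        have e2 := (hQ a ha).1
        have e3 := hex a b ha hb h
        rw [hab] at e2
        linarith
      · have e1 := (hQ a ha).2
        have e2 := (hQ b hb).1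
        have e3 := hex b a hb ha h
        rw [← hab] at e2
        linarith
    have hcount : (Ioo (0:ℝ) m₀).Countable := by
      rw [countable_iff_exists_injOn]
      exact ⟨fun m => Encodable.encode (Q m),
        fun a ha b hb h => hinj ha hb (Encodable.encode_injective h)⟩
    have := hcount.measure_zero MeasureTheory.volume
    rw [Real.volume_Ioo] at this
    simp at this
    linarith

/-- If `D ⊆ ℝⁿ` is a non-convex domain, then there are points `a, b ∈ D` whose midpoint
`c = (a+b)/2` lies on `∂D` while `[a,b] \ {c} ⊆ D`. -/
theorem exists_segment_touching_boundary_at_midpoint_of_not_convex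
    {n : ℕ} (D : Set (EuclideanSpace ℝ (Fin n)))
    (hD : IsOpen D ∧ IsConnected D) (hnc : ¬ Convex ℝ D) :
    ∃ a ∈ D, ∃ b ∈ D,
      midpoint ℝ a b ∈ frontier D ∧
      segment ℝ a b \ {midpoint ℝ a b} ⊆ D := by
  obtain ⟨hDo, hDc⟩ := hD
  rw [convex_iff_segment_subset] at hnc
  push_neg at hnc
  obtain ⟨p, hpD, q, hqD, hpq⟩ := hnc
  -- the star-shaped set around p
  set A : Set (EuclideanSpace ℝ (Fin n)) := {x | segment ℝ p x ⊆ D} with hAdef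
  have hAsub : A ⊆ D := fun x hx => hx (right_mem_segment ℝ p x)
  have hAopen : IsOpen A := by
    rw [Metric.isOpen_iff]
    intro x hx
    have hcseg : IsCompact (segment ℝ p x) := by
      rw [segment_eq_image]
      exact isCompact_Icc.image (by continuity)
    obtain ⟨δ, hδpos, hδ⟩ := hcseg.exists_thickening_subset_open hDo hx
    refine ⟨δ, hδpos, fun y hy => ?_⟩
    intro u hu
    apply hδ
    rw [segment_eq_image'] at hu
    obtain ⟨θ, hθ, rfl⟩ := hu
    rw [Metric.mem_thickening_iff]
    refine ⟨p + θ • (x - p), ?_, ?_⟩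
    · rw [segment_eq_image']; exact ⟨θ, hθ, rfl⟩
    · have heq : dist (p + θ • (y - p)) (p + θ • (x - p)) = ‖θ • (y - x)‖ := by
        rw [dist_eq_norm]
        congr 1
        module
      rw [heq, norm_smul]
      have h1 : ‖y - x‖ = dist y x := (dist_eq_norm y x).symm
      have h2 : |θ| ≤ 1 := by rw [abs_le]; obtain ⟨h1', h2'⟩ := hθ; exact ⟨by linarith, h2'⟩
      have h3 : dist y x < δ := by rwa [Metric.mem_ball] at hy
      calc |θ| * ‖y - x‖ ≤ 1 * ‖y - x‖ := by
            apply mul_le_mul_of_nonneg_right h2 (norm_nonneg _)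
      _ = dist y x := by rw [one_mul, h1]
      _ < δ := h3
  have hpA : p ∈ A := by
    intro u hu
    rw [segment_same, mem_singleton_iff] at hu
    rw [hu]; exact hpD
  have hqA : q ∉ A := hpq
  -- a point of D in the closure of A but not in A
  have hxstar : ∃ x, x ∈ D ∧ x ∈ closure A ∧ x ∉ A := by
    by_cases hcase : ∀ x, x ∈ D → x ∈ closure A → x ∈ A
    · exfalso
      have hpre := hDc.isPreconnected
      have hne := hpre A (closure A)ᶜ hAopen (isClosed_closure.isOpen_compl)
        (fun x hx => by
          by_cases hc : x ∈ closure A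
          · exact Or.inl (hcase x hx hc)
          · exact Or.inr hc)
        ⟨p, hpD, hpA⟩
        ⟨q, hqD, fun hc => hqA (hcase q hqD hc)⟩
      obtain ⟨x, _, hxA, hxc⟩ := hne
      exact hxc (subset_closure hxA)
    · push_neg at hcase
      obtain ⟨x, h1, h2, h3⟩ := hcase
      exact ⟨x, h1, h2, h3⟩
  obtain ⟨xs, hxsD, hxscl, hxsA⟩ := hxstar
  obtain ⟨εs, hεs, hball⟩ := Metric.isOpen_iff.mp hDo xs hxsD
  obtain ⟨e, heA, hed⟩ : ∃ e ∈ A, dist xs e < εs := Metric.mem_closure_iff.mp hxscl εs hεs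
  set y : ℝ → EuclideanSpace ℝ (Fin n) := fun s => e + s • (xs - e) with hydef
  have hycont : Continuous y := by
    apply continuous_const.add
    exact continuous_id.smul continuous_const
  have hyD : ∀ s, 0 ≤ s → s ≤ 1 → y s ∈ D := by
    intro s h0 h1
    apply hball
    rw [Metric.mem_ball]
    have heq : dist (y s) xs = ‖(1 - s) • (e - xs)‖ := by
      rw [dist_eq_norm]
      congr 1
      simp only [hydef]
      module
    rw [heq, norm_smul]
    have h2 : |1 - s| ≤ 1 := by rw [abs_le]; constructor <;> linarith
    have h3 : ‖e - xs‖ = dist xs e := by rw [← dist_eq_norm, dist_comm]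
    calc |1 - s| * ‖e - xs‖ ≤ 1 * ‖e - xs‖ :=
          mul_le_mul_of_nonneg_right h2 (norm_nonneg _)
    _ < εs := by rw [one_mul, h3]; exact hed
  set M : Set ℝ := {s | s ∈ Icc (0:ℝ) 1 ∧ ∀ s', 0 ≤ s' → s' ≤ s → y s' ∈ A} with hMdef
  have h0M : (0:ℝ) ∈ M := by
    refine ⟨⟨le_refl 0, zero_le_one⟩, fun s' h0 h1 => ?_⟩
    have : s' = 0 := le_antisymm h1 h0
    rw [this]
    have : y 0 = e := by simp [hydef]
    rw [this]; exact heA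
  have hMbdd : BddAbove M := ⟨1, fun s hs => hs.1.2⟩
  set ss : ℝ := sSup M with hssdef
  have hss0 : 0 ≤ ss := le_csSup hMbdd h0M
  have hss1 : ss ≤ 1 := csSup_le ⟨0, h0M⟩ (fun s hs => hs.1.2)
  have hlt : ∀ s, 0 ≤ s → s < ss → y s ∈ A := by
    intro s h0 hslt
    obtain ⟨t, htM, hst⟩ := exists_lt_of_lt_csSup ⟨0, h0M⟩ hslt
    exact htM.2 s h0 (le_of_lt hst)
  have hy1 : y 1 = xs := by simp [hydef]
  have hssA : y ss ∉ A := by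
    intro hyA
    have hss1' : ss < 1 := by
      rcases lt_or_eq_of_le hss1 with h | h
      · exact h
      · exfalso; rw [h, hy1] at hyA; exact hxsA hyA
    have hnb : y ⁻¹' A ∈ nhds ss := hycont.continuousAt.preimage_mem_nhds (hAopen.mem_nhds hyA)
    rw [Metric.mem_nhds_iff] at hnb
    obtain ⟨δ, hδpos, hδ⟩ := hnb
    set s2 : ℝ := min (ss + δ/2) 1 with hs2def
    have hs2M : s2 ∈ M := by
      refine ⟨⟨le_trans hss0 (le_min (by linarith) (by linarith)), min_le_right _ _⟩,
        fun s' h0 h1 => ?_⟩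
      rcases lt_or_ge s' ss with h | h
      · exact hlt s' h0 h
      · apply hδ
        rw [Metric.mem_ball, Real.dist_eq, abs_sub_lt_iff]
        constructor
        · have : s' ≤ ss + δ/2 := le_trans h1 (min_le_left _ _)
          linarith
        · linarith
    have := le_csSup hMbdd hs2M
    have hgt : ss < s2 := lt_min (by linarith) hss1'
    linarith
  have hsspos : 0 < ss := by
    rcases lt_or_eq_of_le hss0 with h | h
    · exact h
    · exfalso
      apply hssA
      rw [← h]
      have : y 0 = e := by simp [hydef]
      rw [this]; exact heA
  set z : EuclideanSpace ℝ (Fin n) := y ss with hzdef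
  have hz' : z = e + ss • (xs - e) := rfl
  have hzD : z ∈ D := hyD ss hss0 hss1
  have hzA : z ∉ A := hssA
  clear_value z
  -- the fan lemma
  have FL : ∀ α β γ : ℝ, 0 ≤ α → 0 ≤ β → 0 < γ → α + β + γ = 1 →
      α • p + β • z + γ • e ∈ D := by
    intro α β γ hα hβ hγ hsum
    have hβγ : 0 < β + γ := by linarith
    have hα1 : 1 - α = β + γ := by linarith
    have hyσ : y (β / (β + γ) * ss) ∈ A := by
      apply hlt
      · positivity
      · have h1 : β / (β + γ) < 1 := by rw [div_lt_one hβγ]; linarith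
        nlinarith
    have hkey : α • p + β • z + γ • e = α • p + (1 - α) • (y (β / (β + γ) * ss)) := by
      have hy' : y (β / (β + γ) * ss) = e + (β / (β + γ) * ss) • (xs - e) := rfl
      rw [hz', hy', hα1]
      have hc1 : (β + γ) * (β / (β + γ) * ss) = β * ss := by
        field_simp
      rw [smul_add, smul_add, smul_smul, smul_smul, hc1]
      module
    rw [hkey]
    exact hyσ ⟨α, 1 - α, hα, by linarith, by ring, rfl⟩
  -- bad point on segment p z
  have hsegbad : ¬ segment ℝ p z ⊆ D := hzA
  obtain ⟨b₀, hb₀seg, hb₀D⟩ : ∃ b₀, b₀ ∈ segment ℝ p z ∧ b₀ ∉ D := by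
    by_contra h; push_neg at h; exact hsegbad h
  obtain ⟨a1, k, ha1, hk', hsum1, hb₀eq⟩ := hb₀seg
  have hk0 : 0 < k := by
    rcases lt_or_eq_of_le hk' with h | h
    · exact h
    · exfalso
      apply hb₀D
      rw [← hb₀eq, ← h]
      have : a1 = 1 := by linarith
      rw [this]
      simp
      exact hpD
  have hk1 : k < 1 := by
    rcases lt_or_eq_of_le (by linarith : k ≤ 1) with h | h
    · exact h
    · exfalso
      apply hb₀D
      rw [← hb₀eq, h]
      have : a1 = 0 := by linarith
      rw [this]
      simp
      exact hzD
  -- the planar chart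
  set Φ : ℝ × ℝ → EuclideanSpace ℝ (Fin n) := fun v => (1 - v.1 - v.2) • p + v.1 • z + v.2 • e with hΦdef
  have hΦcont : Continuous Φ := by
    apply Continuous.add
    apply Continuous.add
    · exact ((continuous_const.sub continuous_fst).sub continuous_snd).smul continuous_const
    · exact continuous_fst.smul continuous_const
    · exact continuous_snd.smul continuous_const
  set U : Set (ℝ × ℝ) := Φ ⁻¹' D with hUdef
  have hUopen : IsOpen U := hDo.preimage hΦcont
  have hkU : ((k, (0:ℝ)) : ℝ × ℝ) ∉ U := by
    show Φ (k, 0) ∉ D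
    have : Φ (k, 0) = b₀ := by
      rw [← hb₀eq, hΦdef]
      simp only
      have : a1 = 1 - k := by linarith
      rw [this]
      module
    rw [this]; exact hb₀D
  have hΦ00 : Φ ((0:ℝ), (0:ℝ)) = p := by rw [hΦdef]; simp
  have hΦ10 : Φ ((1:ℝ), (0:ℝ)) = z := by rw [hΦdef]; simp
  obtain ⟨δ₁, hδ₁, hb₁⟩ := Metric.isOpen_iff.mp hUopen (0,0)
    (by show Φ (0,0) ∈ D; rw [hΦ00]; exact hpD)
  obtain ⟨δ₂, hδ₂, hb₂⟩ := Metric.isOpen_iff.mp hUopen (1,0)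
    (by show Φ (1,0) ∈ D; rw [hΦ10]; exact hzD)
  have hstrip : ∀ x yy : ℝ, 0 ≤ x → x ≤ 1 → 0 < yy → x + yy ≤ 1 → ((x, yy) : ℝ × ℝ) ∈ U := by
    intro x yy hx hx1 hy hxy
    show Φ (x, yy) ∈ D
    have := FL (1 - x - yy) x yy (by linarith) hx hy (by ring)
    rw [hΦdef]
    simp only
    exact this
  obtain ⟨a2, b2, c2, ha2U, hb2U, hc2U, hmid2, hseg2⟩ :=
    core2d U hUopen k hk0 hk1 hkU δ₁ δ₂ hδ₁ hδ₂ hb₁ hb₂ hstrip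
  have h1c : a2.1 + b2.1 = 2 * c2.1 := by
    have := congrArg Prod.fst hmid2
    simpa [Prod.smul_def] using this
  have h2c : a2.2 + b2.2 = 2 * c2.2 := by
    have := congrArg Prod.snd hmid2
    simpa [Prod.smul_def] using this
  have ha2b2 : a2 ≠ b2 := by
    intro h
    apply hc2U
    have hc2a : c2 = a2 := by
      rw [h] at h1c h2c
      have e1 : c2.1 = b2.1 := by linarith
      have e2 : c2.2 = b2.2 := by linarith
      rw [h]
      exact Prod.ext e1 e2
    rw [hc2a]
    rw [h]
    exact hb2U
  -- the parametrized segment in the plane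
  have hparam : ∀ θ : ℝ, a2 + θ • (b2 - a2) = (a2.1 + θ * (b2.1 - a2.1), a2.2 + θ * (b2.2 - a2.2)) := by
    intro θ
    rfl
  have hc2param : c2 = a2 + (1/2 : ℝ) • (b2 - a2) := by
    rw [hparam]
    refine Prod.ext ?_ ?_ <;> simp only <;> linarith
  have hΦlin : ∀ θ : ℝ, Φ a2 + θ • (Φ b2 - Φ a2) = Φ (a2 + θ • (b2 - a2)) := by
    intro θ
    rw [hparam, hΦdef]
    simp only
    module
  have hpuncture : ∀ θ : ℝ, 0 ≤ θ → θ ≤ 1 → θ ≠ 1/2 → Φ (a2 + θ • (b2 - a2)) ∈ D := by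
    intro θ h0 h1 hne
    rcases hseg2 θ ⟨h0, h1⟩ with hc | hU'
    · exfalso
      apply hne
      rw [hc2param] at hc
      have := congrArg Prod.fst hc
      rw [hparam, hparam] at this
      simp only at this
      have hd : (θ - 1/2) * (b2.1 - a2.1) = 0 := by linarith
      rcases mul_eq_zero.mp hd with h | h
      · linarith
      · exfalso
        have := congrArg Prod.snd hc
        rw [hparam, hparam] at this
        simp only at this
        have hd2 : (θ - 1/2) * (b2.2 - a2.2) = 0 := by linarith
        rcases mul_eq_zero.mp hd2 with h2 | h2
        · apply hne; linarith
        · apply ha2b2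
          have e1 : b2.1 = a2.1 := by linarith
          have e2 : b2.2 = a2.2 := by linarith
          exact (Prod.ext e1.symm e2.symm)
    · exact hU'
  have hmidE : midpoint ℝ (Φ a2) (Φ b2) = Φ c2 := by
    rw [midpoint_eq_smul_add, invOf_eq_inv]
    rw [hΦdef]
    simp only
    match_scalars <;> field_simp <;> linarith
  refine ⟨Φ a2, ha2U, Φ b2, hb2U, ?_, ?_⟩
  · rw [hmidE, hDo.frontier_eq]
    constructor
    · -- closure via sequence
      have hθseq : Filter.Tendsto (fun j : ℕ => (1/2 : ℝ) + ((j:ℝ) + 3)⁻¹)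
          Filter.atTop (nhds (1/2)) := by
        have h3 : Filter.Tendsto (fun j : ℕ => (j:ℝ) + 3) Filter.atTop Filter.atTop :=
          Filter.tendsto_atTop_add_const_right _ 3 tendsto_natCast_atTop_atTop
        have h4 := tendsto_inv_atTop_zero.comp h3
        have := h4.const_add (1/2 : ℝ)
        simpa using this
      have hpt : Filter.Tendsto (fun j : ℕ => Φ (a2 + ((1/2 : ℝ) + ((j:ℝ) + 3)⁻¹) • (b2 - a2)))
          Filter.atTop (nhds (Φ c2)) := by
        have hin : Filter.Tendsto (fun j : ℕ => a2 + ((1/2 : ℝ) + ((j:ℝ) + 3)⁻¹) • (b2 - a2))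
            Filter.atTop (nhds (a2 + (1/2 : ℝ) • (b2 - a2))) := by
          apply Filter.Tendsto.const_add
          exact hθseq.smul_const _
        rw [← hc2param] at hin
        exact (hΦcont.continuousAt.tendsto).comp hin
      apply mem_closure_of_tendsto hpt
      filter_upwards with j
      apply hpuncture
      · have : (0:ℝ) < ((j:ℝ) + 3)⁻¹ := by positivity
        linarith
      · have h5 : ((j:ℝ) + 3)⁻¹ ≤ 1/2 := by
          rw [inv_le_comm₀ (by positivity) (by norm_num)]
          push_cast
          linarith [Nat.cast_nonneg (α := ℝ) j]
        linarith
      · have : (0:ℝ) < ((j:ℝ) + 3)⁻¹ := by positivity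
        intro hh
        linarith
    · exact hc2U
  · intro u hu
    obtain ⟨huseg, humid⟩ := hu
    rw [segment_eq_image'] at huseg
    obtain ⟨θ, hθ, huθ⟩ := huseg
    have hgoal : Φ a2 + θ • (Φ b2 - Φ a2) ∈ D := by
      rw [hΦlin]
      apply hpuncture θ hθ.1 hθ.2
      intro hhalf
      apply humid
      rw [mem_singleton_iff, ← huθ, hmidE]
      show Φ a2 + θ • (Φ b2 - Φ a2) = Φ c2
      rw [hΦlin, hhalf, ← hc2param]
    rw [← huθ]
    exact hgoal
end
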